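/- arXiv:2104.05701 — 2 statements merged into one kernel-verified Lean document; each statement's English description precedes it below -/
import Mathlib

section
/- For any f ∈ Θ_{k,n} and any inversion (i,j) of f, the winding data of the two resolved cycles adds up to that of f: if the two cycles of f̄^{(i,j)} (viewed, via order-preserving relabeling of their supports, as full-cycle permutations in S_{n_1} and S_{n_2}) have winding numbers k_1, k_2, then k_1 + k_2 = k and n_1 + n_2 = n. -/
open Finset

/-- `f : ℤ → ℤ` is an `n`-periodic affine permutation. -/
def IsAffinePerm (n : ℕ) (f : ℤ → ℤ) : Prop :=
  Function.Bijective f ∧ ∀ i : ℤ, f (i + (n : ℤ)) = f i + (n : ℤ)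

/-- Boundedness condition `i ≤ f i ≤ i + n`. -/
def IsBoundedFn (n : ℕ) (f : ℤ → ℤ) : Prop :=
  ∀ i : ℤ, i ≤ f i ∧ f i ≤ i + (n : ℤ)

/-- Bounded affine permutation. -/
def IsBAP (n : ℕ) (f : ℤ → ℤ) : Prop := IsAffinePerm n f ∧ IsBoundedFn n f

/-- The orbit of the residue of `a` under the reduction of `f` modulo `n`. -/
def orbitF (n : ℕ) (f : ℤ → ℤ) (a : ℤ) : Finset ℤ :=
  (Finset.range n).image (fun r => (f^[r] a) % (n : ℤ))

/-- The reduction of `f` modulo `n` is an `n`-cycle. -/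
def IsCycleMod (n : ℕ) (f : ℤ → ℤ) : Prop :=
  ∀ j : ℤ, ∃ r : ℕ, r < n ∧ (f^[r] 0) % (n : ℤ) = j % (n : ℤ)

/-- The winding number `k(f̄) = #{i ∈ [1,n] : f̄(i) < i} = #{i ∈ [1,n] : f(i) > n}`. -/
noncomputable def winding (n : ℕ) (f : ℤ → ℤ) : ℕ :=
  ((Finset.Icc (1 : ℤ) (n : ℤ)).filter (fun i => (n : ℤ) < f i)).card

/-- `f ∈ Θ_{k,n}`: a bounded affine permutation whose reduction modulo `n`
is an `n`-cycle with winding number `k`. -/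
def IsTheta (k n : ℕ) (f : ℤ → ℤ) : Prop :=
  IsBAP n f ∧ IsCycleMod n f ∧ winding n f = k

/-- Inversions of `f`: pairs `i < j` with `f(i) > f(j)` and `i ∈ [n]`
(for a bounded affine permutation all inversions lie in the indicated box). -/
noncomputable def inversions (n : ℕ) (f : ℤ → ℤ) : Finset (ℤ × ℤ) :=
  ((Finset.Icc (1 : ℤ) (n : ℤ)) ×ˢ (Finset.Icc (1 : ℤ) (3 * (n : ℤ)))).filter
    (fun p => p.1 < p.2 ∧ f p.2 < f p.1)

/-- The length `ℓ(f)`, i.e. the number of inversions. -/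
noncomputable def alen (n : ℕ) (f : ℤ → ℤ) : ℕ := (inversions n f).card

/-- The number of cycles of the reduction of `f` modulo `n`. -/
def numCycles (n : ℕ) (f : ℤ → ℤ) : ℕ :=
  ((Finset.range n).image (fun a : ℕ => orbitF n f (a : ℤ))).card

/-- The affine simple transposition `s_i`, swapping `i + rn` and `i + 1 + rn` for all `r`. -/
def sT (n : ℕ) (i : ℤ) (j : ℤ) : ℤ :=
  if j % (n : ℤ) = i % (n : ℤ) then j + 1
  else if j % (n : ℤ) = (i + 1) % (n : ℤ) then j - 1
  else j

/-- `s_i f`. -/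
def mulS (n : ℕ) (i : ℤ) (f : ℤ → ℤ) : ℤ → ℤ := fun m => sT n i (f m)

/-- `f s_i`. -/
def smulS (n : ℕ) (i : ℤ) (f : ℤ → ℤ) : ℤ → ℤ := fun m => f (sT n i m)

/-- `s_i f s_i`. -/
def conjS (n : ℕ) (i : ℤ) (f : ℤ → ℤ) : ℤ → ℤ := fun m => sT n i (f (sT n i m))

/-- The cyclic shift `σ`. -/
def cshift (f : ℤ → ℤ) : ℤ → ℤ := fun i => f (i - 1) + 1

/-- Resolving the crossing `(i,j)`: swap the values `f(i)` and `f(j)` `n`-periodically. -/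
def resolve (n : ℕ) (f : ℤ → ℤ) (i j : ℤ) : ℤ → ℤ := fun m =>
  if m % (n : ℤ) = i % (n : ℤ) then f j + (m - i)
  else if m % (n : ℤ) = j % (n : ℤ) then f i + (m - j)
  else f m

/-- `g'` is the order-preserving relabeling (by `ℤ`, `n'`-periodically) of the
restriction of `g` to the set `S` of integers. -/
def IsRelabelOn (n : ℕ) (g : ℤ → ℤ) (S : Set ℤ) (n' : ℕ) (g' : ℤ → ℤ) : Prop :=
  ∃ φ : ℤ → ℤ, StrictMono φ ∧ (∀ m : ℤ, φ (m + (n' : ℤ)) = φ m + (n : ℤ)) ∧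
    Set.range φ = S ∧ ∀ m : ℤ, g (φ m) = φ (g' m)

/-- The parameters `(k₁, n₁)` of the cycle of `g` through `a`:
`n₁` is the size of the orbit of the residue of `a`, and `k₁` is the winding number of the
permutation obtained by order-preserving relabeling of the restriction of `g`
to the integers whose residue lies in that orbit. -/
noncomputable def resParamsAt (n : ℕ) (g : ℤ → ℤ) (a : ℤ) : ℕ × ℕ :=
  (sInf {k₁ : ℕ | ∃ g₁ : ℤ → ℤ,
      IsRelabelOn n g {m : ℤ | m % (n : ℤ) ∈ orbitF n g a} (orbitF n g a).card g₁ ∧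
      winding (orbitF n g a).card g₁ = k₁},
   (orbitF n g a).card)

/-- The inversion multiset `F'(f)`: one point `(k₁, n₁)` for each inversion `(i,j)`,
recording the parameters of the cycle through `i` after resolving the crossing. -/
noncomputable def invMultiset (n : ℕ) (f : ℤ → ℤ) : Multiset (ℕ × ℕ) :=
  Multiset.map (fun p => resParamsAt n (resolve n f p.1 p.2) p.1) (inversions n f).val

/-- The inversion multiset `F(f)` in `(k, n-k)`-coordinates: points `(k₁, n₁ - k₁)`. -/
noncomputable def invMultisetF (n : ℕ) (f : ℤ → ℤ) : Multiset (ℕ × ℕ) :=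
  Multiset.map (fun p => (p.1, p.2 - p.1)) (invMultiset n f)

/-- `f` is repetition-free if its inversion multiset has no repeated elements. -/
def RepFree (n : ℕ) (f : ℤ → ℤ) : Prop := (invMultiset n f).Nodup

/-- A double crossing at `i`: with `a = f⁻¹(i+1)`, `b = f⁻¹(i)`, `c = f(i+1)`, `d = f(i)`,
we have `a < b < i < i+1 < c < d`. -/
def DoubleCrossingAt (n : ℕ) (f : ℤ → ℤ) (i : ℤ) : Prop :=
  ∃ a b : ℤ, f a = i + 1 ∧ f b = i ∧ a < b ∧ b < i ∧ i + 1 < f (i + 1) ∧ f (i + 1) < f i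

/-- `i` and `j` lie in the same cycle of the reduction of `f` modulo `n`. -/
def SameCycleMod (n : ℕ) (f : ℤ → ℤ) (i j : ℤ) : Prop :=
  j % (n : ℤ) ∈ orbitF n f i

/-- The recurrence defining the positroid Catalan numbers `C_f`. -/
structure CatalanRules (C : (n : ℕ) → (ℤ → ℤ) → ℕ) : Prop where
  base : ∀ f : ℤ → ℤ, IsBAP 1 f → C 1 f = 1
  fix_removal : ∀ (n n' : ℕ) (f f' : ℤ → ℤ), IsBAP n f → IsBAP n' f' →
    IsRelabelOn n f {m : ℤ | f m ≠ m ∧ f m ≠ m + (n : ℤ)} n' f' → C n f = C n' f'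
  mul_left : ∀ (n : ℕ) (f : ℤ → ℤ) (i : ℤ), 2 ≤ n → IsBAP n f →
    (f i = i + 1 ∨ f (i + 1) = i + (n : ℤ)) → C n f = C n (mulS n i f)
  mul_right : ∀ (n : ℕ) (f : ℤ → ℤ) (i : ℤ), 2 ≤ n → IsBAP n f →
    (f i = i + 1 ∨ f (i + 1) = i + (n : ℤ)) → C n f = C n (smulS n i f)
  conj_inv : ∀ (n : ℕ) (f : ℤ → ℤ) (i : ℤ), IsBAP n f → IsBAP n (conjS n i f) →
    alen n (conjS n i f) = alen n f → C n (conjS n i f) = C n f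
  double_same : ∀ (n : ℕ) (f : ℤ → ℤ) (i : ℤ), IsBAP n f → DoubleCrossingAt n f i →
    SameCycleMod n f i (i + 1) → C n (conjS n i f) = C n (mulS n i f) + C n f
  double_diff : ∀ (n : ℕ) (f : ℤ → ℤ) (i : ℤ), IsBAP n f → DoubleCrossingAt n f i →
    ¬ SameCycleMod n f i (i + 1) → C n (conjS n i f) = C n f

/-- The value `f^r(0)` for `r ∈ ℤ` (using `f^n(0) = kn` to extend periodically). -/
def bigPt (n k : ℕ) (f : ℤ → ℤ) (r : ℤ) : ℤ :=
  f^[(r % (n : ℤ)).toNat] 0 + (r / (n : ℤ)) * ((k : ℤ) * (n : ℤ))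

/-- The big path `P_∞` of `f`: the piecewise-linear path through the points
`(r, f^r(0)/n)` for `r ∈ ℤ` (horizontal coordinate `r`, vertical `f^r(0)/n`). -/
def bigPath (n k : ℕ) (f : ℤ → ℤ) : Set (ℝ × ℝ) :=
  ⋃ r : ℤ, segment ℝ ((r : ℝ), (bigPt n k f r : ℝ) / (n : ℝ))
    ((r : ℝ) + 1, (bigPt n k f (r + 1) : ℝ) / (n : ℝ))

/-- The small path `P^{(f)}`: the piecewise-linear path through the points
`(r, f^r(0)/n)` for `r = 0, 1, …, n`. -/
def smallPath (n : ℕ) (f : ℤ → ℤ) : Set (ℝ × ℝ) :=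
  ⋃ r ∈ Finset.range n, segment ℝ ((r : ℝ), ((f^[r] 0 : ℤ) : ℝ) / (n : ℝ))
    ((r : ℝ) + 1, ((f^[r + 1] 0 : ℤ) : ℝ) / (n : ℝ))

/-- The number of up steps among the first `t` steps of `s`. -/
def upsTo (n : ℕ) (s : Fin n → Bool) (t : ℕ) : ℕ :=
  (Finset.univ.filter (fun r : Fin n => r.val < t ∧ s r = true)).card

/-- The number of lattice paths from `(0,0)` to `(k, n-k)` with unit up and right steps
(`n` steps in total, recorded by `s : Fin n → Bool`, `true` = up) which stay above the
main diagonal of the `k × (n-k)` rectangle and avoid every point of `F`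
(points recorded as `(height, horizontal position)`). -/
noncomputable def dyckCount (k n : ℕ) (F : Multiset (ℕ × ℕ)) : ℕ :=
  Nat.card {s : Fin n → Bool //
    upsTo n s n = k ∧
    (∀ t ≤ n, k * (t - upsTo n s t) ≤ (n - k) * upsTo n s t) ∧
    (∀ t ≤ n, (upsTo n s t, t - upsTo n s t) ∉ F)}


namespace Stmt7

/-- periodicity in integer multiples -/
lemma per_mul {n : ℕ} {f : ℤ → ℤ} (hf : ∀ m : ℤ, f (m + (n : ℤ)) = f m + (n : ℤ))
    (t : ℤ) (m : ℤ) : f (m + t * (n : ℤ)) = f m + t * (n : ℤ) := by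
  induction t using Int.induction_on with
  | zero => simp
  | succ t ih =>
      have h1 : m + ((t : ℤ) + 1) * (n : ℤ) = (m + t * n) + n := by ring
      rw [h1, hf, ih]; ring
  | pred t ih =>
      have h1 : m + (-(t : ℤ) - 1) * (n : ℤ) = (m + (-(t : ℤ)) * n) - n := by ring
      have h2 : f ((m + (-(t : ℤ)) * n) - n) = f (m + (-(t : ℤ)) * n) - n := by
        have h3 := hf ((m + (-(t : ℤ)) * n) - n)
        have h4 : m + -(t : ℤ) * (n : ℤ) - n + n = m + -(t : ℤ) * n := by ring
        rw [h4] at h3; linarith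
      rw [h1, h2, ih]; ring

lemma shift_of_emod {n : ℕ} {f : ℤ → ℤ} (hf : ∀ m : ℤ, f (m + (n : ℤ)) = f m + (n : ℤ))
    {x y : ℤ} (h : x % (n : ℤ) = y % (n : ℤ)) : f x = f y + (x - y) := by
  obtain ⟨t, ht⟩ := Int.ModEq.dvd (Int.ModEq.symm h)
  have hc : (n : ℤ) * t = t * n := mul_comm _ _
  have hx : x = y + t * (n : ℤ) := by omega
  rw [hx, per_mul hf]; omega

lemma emod_apply_congr {n : ℕ} {f : ℤ → ℤ} (hf : ∀ m : ℤ, f (m + (n : ℤ)) = f m + (n : ℤ))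
    {x y : ℤ} (h : x % (n : ℤ) = y % (n : ℤ)) : f x % (n : ℤ) = f y % (n : ℤ) := by
  rw [shift_of_emod hf h]
  obtain ⟨t, ht⟩ := Int.ModEq.dvd (Int.ModEq.symm h)
  have hc : (n : ℤ) * t = t * n := mul_comm _ _
  have : x - y = t * n := by omega
  rw [this, Int.add_mul_emod_self_right]

lemma inj_emod {n : ℕ} {f : ℤ → ℤ} (hf : ∀ m : ℤ, f (m + (n : ℤ)) = f m + (n : ℤ))
    (hinj : Function.Injective f) {x y : ℤ}
    (h : f x % (n : ℤ) = f y % (n : ℤ)) : x % (n : ℤ) = y % (n : ℤ) := by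
  obtain ⟨t, ht⟩ := Int.ModEq.dvd (Int.ModEq.symm h)
  have hc : (n : ℤ) * t = t * n := mul_comm _ _
  have hx : f x = f (y + t * (n : ℤ)) := by rw [per_mul hf]; omega
  have h2 := hinj hx
  rw [h2, Int.add_mul_emod_self_right]

lemma emod_emod_self (a : ℤ) (n : ℕ) : a % (n:ℤ) % (n:ℤ) = a % (n:ℤ) :=
  Int.emod_emod_of_dvd a dvd_rfl

lemma orbitF_mem_self {n : ℕ} (hn : 0 < n) (g : ℤ → ℤ) (a : ℤ) :
    a % (n:ℤ) ∈ orbitF n g a := by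
  rw [orbitF]
  exact Finset.mem_image.mpr ⟨0, Finset.mem_range.mpr hn, by simp⟩

lemma orbitF_bounds {n : ℕ} (hn : 0 < n) {g : ℤ → ℤ} {a x : ℤ} (hx : x ∈ orbitF n g a) :
    0 ≤ x ∧ x < (n:ℤ) := by
  rw [orbitF] at hx
  obtain ⟨r, _, rfl⟩ := Finset.mem_image.mp hx
  exact ⟨Int.emod_nonneg _ (by exact_mod_cast hn.ne'), Int.emod_lt_of_pos _ (by exact_mod_cast hn)⟩

/-- successor property of the orbit sequence -/
lemma sq_succ {n : ℕ} {g : ℤ → ℤ} (hgper : ∀ m : ℤ, g (m + (n:ℤ)) = g m + (n:ℤ))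
    (a : ℤ) (r : ℕ) : g^[r+1] a % (n:ℤ) = g (g^[r] a % (n:ℤ)) % (n:ℤ) := by
  rw [Function.iterate_succ_apply']
  exact emod_apply_congr hgper (emod_emod_self _ _).symm

lemma sq_peel_iter {n : ℕ} {g : ℤ → ℤ} (hgper : ∀ m : ℤ, g (m + (n:ℤ)) = g m + (n:ℤ))
    (hginj : Function.Injective g) (a : ℤ) (t : ℕ) :
    ∀ x y : ℕ, g^[x + t] a % (n:ℤ) = g^[y + t] a % (n:ℤ)
      → g^[x] a % (n:ℤ) = g^[y] a % (n:ℤ) := by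
  induction t with
  | zero => intro x y h; exact h
  | succ t ih =>
      intro x y h
      apply ih
      have hx : x + (t+1) = (x + t) + 1 := by omega
      have hy : y + (t+1) = (y + t) + 1 := by omega
      rw [hx, hy, sq_succ hgper, sq_succ hgper] at h
      have := inj_emod hgper hginj h
      rw [emod_emod_self, emod_emod_self] at this
      exact this

lemma sq_shift_per {n : ℕ} {g : ℤ → ℤ} (hgper : ∀ m : ℤ, g (m + (n:ℤ)) = g m + (n:ℤ))
    (a : ℤ) {d : ℕ} (hbase : g^[d] a % (n:ℤ) = g^[0] a % (n:ℤ)) :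
    ∀ r : ℕ, g^[r + d] a % (n:ℤ) = g^[r] a % (n:ℤ) := by
  intro r
  induction r with
  | zero => simpa using hbase
  | succ r ih =>
      have h1 : r + 1 + d = (r + d) + 1 := by omega
      rw [h1, sq_succ hgper, ih, ← sq_succ hgper]

lemma sq_mod_per {n : ℕ} {g : ℤ → ℤ} (hgper : ∀ m : ℤ, g (m + (n:ℤ)) = g m + (n:ℤ))
    (a : ℤ) {d : ℕ} (hd : 0 < d) (hbase : g^[d] a % (n:ℤ) = g^[0] a % (n:ℤ)) :
    ∀ r : ℕ, g^[r] a % (n:ℤ) = g^[r % d] a % (n:ℤ) := by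
  intro r
  induction r using Nat.strong_induction_on with
  | _ r ih =>
      by_cases hr : r < d
      · rw [Nat.mod_eq_of_lt hr]
      · push_neg at hr
        have h1 : r = (r - d) + d := by omega
        conv_lhs => rw [h1, sq_shift_per hgper a hbase]
        rw [ih (r-d) (by omega), Nat.mod_eq_sub_mod hr]

/-- existence of a period of the orbit sequence -/
lemma sq_exists_period {n : ℕ} (hn : 0 < n) {g : ℤ → ℤ}
    (hgper : ∀ m : ℤ, g (m + (n:ℤ)) = g m + (n:ℤ)) (hginj : Function.Injective g) (a : ℤ) :
    ∃ d : ℕ, 0 < d ∧ d ≤ n ∧ g^[d] a % (n:ℤ) = g^[0] a % (n:ℤ) := by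
  have hmaps : ∀ r ∈ Finset.range (n+1), g^[r] a % (n:ℤ) ∈ Finset.Ico (0:ℤ) (n:ℤ) := by
    intro r _
    rw [Finset.mem_Ico]
    exact ⟨Int.emod_nonneg _ (by exact_mod_cast hn.ne'), Int.emod_lt_of_pos _ (by exact_mod_cast hn)⟩
  have hcardlt : (Finset.Ico (0:ℤ) (n:ℤ)).card < (Finset.range (n+1)).card := by
    rw [Int.card_Ico, Finset.card_range]
    omega
  obtain ⟨x, hx, y, hy, hxy, hmap⟩ :=
    Finset.exists_ne_map_eq_of_card_lt_of_maps_to hcardlt hmaps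
  rw [Finset.mem_range] at hx hy
  rcases Nat.lt_or_ge x y with hlt | hge
  · refine ⟨y - x, by omega, by omega, ?_⟩
    apply sq_peel_iter hgper hginj a x
    rw [zero_add]
    have : y - x + x = y := by omega
    rw [this]
    exact (hmap).symm
  · have hlt : y < x := by omega
    refine ⟨x - y, by omega, by omega, ?_⟩
    apply sq_peel_iter hgper hginj a y
    rw [zero_add]
    have : x - y + y = x := by omega
    rw [this]
    exact hmap

/-- orbits are closed under the reduction of `g` -/
lemma orbit_closed {n : ℕ} (hn : 0 < n) {g : ℤ → ℤ}
    (hgper : ∀ m : ℤ, g (m + (n:ℤ)) = g m + (n:ℤ)) (hginj : Function.Injective g) (a : ℤ) :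
    ∀ m : ℤ, m % (n:ℤ) ∈ orbitF n g a → g m % (n:ℤ) ∈ orbitF n g a := by
  intro m hm
  rw [orbitF, Finset.mem_image] at hm
  obtain ⟨r, hr, hrm⟩ := hm
  rw [Finset.mem_range] at hr
  obtain ⟨d, hd0, hdn, hdper⟩ := sq_exists_period hn hgper hginj a
  have h1 : g m % (n:ℤ) = g^[r+1] a % (n:ℤ) := by
    rw [sq_succ hgper]
    apply emod_apply_congr hgper
    rw [emod_emod_self, hrm]
  rw [h1, sq_mod_per hgper a hd0 hdper (r+1)]
  rw [orbitF, Finset.mem_image]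
  exact ⟨(r+1) % d, Finset.mem_range.mpr (by have := Nat.mod_lt (r+1) hd0; omega), rfl⟩

lemma sum_window (D : ℤ → ℤ) (c : ℤ) (d : ℕ) :
    ∑ m ∈ Finset.Icc (c+1) (c+(d:ℤ)), D m = ∑ r ∈ Finset.range d, D (c+1+(r:ℤ)) := by
  refine Finset.sum_nbij' (i := fun m => (m - (c+1)).toNat) (j := fun r => c+1+(r:ℤ)) ?_ ?_ ?_ ?_ ?_
  all_goals intro a ha
  all_goals beta_reduce
  all_goals simp only [Finset.mem_Icc, Finset.mem_range] at ha ⊢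
  · omega
  · omega
  · beta_reduce; omega
  · beta_reduce; omega
  · congr 1; omega

lemma sum_disp_window {d : ℕ} (hd : 0 < d) {h : ℤ → ℤ}
    (hper : ∀ m, h (m + (d:ℤ)) = h m + (d:ℤ)) (c : ℤ) :
    ∑ m ∈ Finset.Icc (c+1) (c+(d:ℤ)), (h m - m) = ∑ m ∈ Finset.Icc 1 (d:ℤ), (h m - m) := by
  set D : ℤ → ℤ := fun x => h x - x with hD
  have hDper : ∀ x : ℤ, D (x + (d:ℤ)) = D x := by
    intro x; simp only [hD]; rw [hper x]; ring
  set A : ℤ → ℤ := fun x => ∑ r ∈ Finset.range d, D (x + (r:ℤ)) with hA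
  have key : ∀ x : ℤ, A (x+1) = A x := by
    intro x
    have h1 : ∑ r ∈ Finset.range d, (D (x+((r:ℤ)+1)) - D (x+(r:ℤ)))
        = D (x+(d:ℤ)) - D (x+((0:ℕ):ℤ)) := by
      have := Finset.sum_range_sub (f := fun r : ℕ => D (x + (r:ℤ))) d
      simpa using this
    have h2 : A (x+1) - A x = D (x+(d:ℤ)) - D (x+((0:ℕ):ℤ)) := by
      rw [← h1, hA]
      beta_reduce
      rw [← Finset.sum_sub_distrib]
      apply Finset.sum_congr rfl
      intro r _
      have : x + 1 + (r:ℤ) = x + ((r:ℤ)+1) := by ring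
      rw [this]
    have h3 : D (x+((0:ℕ):ℤ)) = D x := by norm_num
    rw [hDper, h3] at h2
    omega
  have main : ∀ x : ℤ, A x = A 0 := by
    intro x
    induction x using Int.induction_on with
    | zero => rfl
    | succ c ih => rw [key, ih]
    | pred c ih =>
        have h := key (-(c:ℤ)-1)
        rw [show -(c:ℤ)-1+1 = -(c:ℤ) by ring] at h
        rw [← h]; exact ih
  have e1 : ∑ m ∈ Finset.Icc (c+1) (c+(d:ℤ)), D m = A (c+1) := by
    rw [sum_window D c d]
  have e2 : ∑ m ∈ Finset.Icc 1 (d:ℤ), D m = A 1 := by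
    have h5 := sum_window D 0 d
    rw [show (0:ℤ)+1 = 1 by ring, show (0:ℤ)+(d:ℤ) = (d:ℤ) by ring] at h5
    exact h5
  calc ∑ m ∈ Finset.Icc (c+1) (c+(d:ℤ)), D m = A (c+1) := e1
    _ = A 0 := main _
    _ = A 1 := (main 1).symm
    _ = ∑ m ∈ Finset.Icc 1 (d:ℤ), D m := e2.symm

lemma card_window_mul {d : ℕ} {h : ℤ → ℤ}
    (hper : ∀ m, h (m + (d:ℤ)) = h m + (d:ℤ))
    (hbd : ∀ m : ℤ, m ≤ h m ∧ h m ≤ m + (d:ℤ))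
    (hinj : Function.Injective h) (c : ℤ) :
    ((((Finset.Icc (c+1) (c+(d:ℤ))).filter (fun m => c+(d:ℤ) < h m)).card : ℤ)) * (d:ℤ)
      = ∑ m ∈ Finset.Icc (c+1) (c+(d:ℤ)), (h m - m) := by
  set W := Finset.Icc (c+1) (c+(d:ℤ)) with hW
  set ρ : ℤ → ℤ := fun m => if c+(d:ℤ) < h m then h m - d else h m with hρ
  have hmaps : ∀ m ∈ W, ρ m ∈ W := by
    intro m hm
    simp only [hW, Finset.mem_Icc] at hm ⊢
    have := hbd m
    simp only [hρ]; split_ifs with hc <;> omega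
  have hinjOn : ∀ m1 ∈ W, ∀ m2 ∈ W, ρ m1 = ρ m2 → m1 = m2 := by
    intro m1 h1 m2 h2 heq
    simp only [hW, Finset.mem_Icc] at h1 h2
    simp only [hρ] at heq
    split_ifs at heq with hc1 hc2 hc2
    · have : h m1 = h m2 := by omega
      exact hinj this
    · have : h m1 = h (m2 + d) := by rw [hper]; omega
      have := hinj this; omega
    · have : h (m1 + d) = h m2 := by rw [hper]; omega
      have := hinj this; omega
    · exact hinj heq
  have hcardim : (W.image ρ).card = W.card := Finset.card_image_of_injOn hinjOn
  have himg : W.image ρ = W := by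
    apply Finset.eq_of_subset_of_card_le
    · intro x hx; obtain ⟨m, hm, rfl⟩ := Finset.mem_image.mp hx; exact hmaps m hm
    · omega
  have hsum1 : ∑ m ∈ W, ρ m = ∑ m ∈ W, m := by
    conv_rhs => rw [← himg]
    rw [Finset.sum_image hinjOn]
  have hsum2 : ∑ m ∈ W, h m = ∑ m ∈ W, ρ m + ∑ m ∈ W, (if c+(d:ℤ) < h m then (d:ℤ) else 0) := by
    rw [← Finset.sum_add_distrib]
    apply Finset.sum_congr rfl
    intro m _
    simp only [hρ]; split_ifs <;> ring
  have hsum3 : ∑ m ∈ W, (if c+(d:ℤ) < h m then (d:ℤ) else 0)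
      = ((W.filter (fun m => c+(d:ℤ) < h m)).card : ℤ) * (d:ℤ) := by
    rw [← Finset.sum_filter, Finset.sum_const, nsmul_eq_mul]
  rw [Finset.sum_sub_distrib, hsum2, hsum1, hsum3]
  ring

lemma card_window_const {d : ℕ} (hd : 0 < d) {h : ℤ → ℤ}
    (hper : ∀ m, h (m + (d:ℤ)) = h m + (d:ℤ))
    (hbd : ∀ m : ℤ, m ≤ h m ∧ h m ≤ m + (d:ℤ))
    (hinj : Function.Injective h) (c : ℤ) :
    ((Finset.Icc (c+1) (c+(d:ℤ))).filter (fun m => c+(d:ℤ) < h m)).card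
      = ((Finset.Icc 1 (d:ℤ)).filter (fun m => (d:ℤ) < h m)).card := by
  have h1 := card_window_mul hper hbd hinj c
  have h2 := card_window_mul hper hbd hinj 0
  rw [sum_disp_window hd hper c] at h1
  rw [sum_disp_window hd hper 0] at h2
  have h3 := h1.trans h2.symm
  have hd' : (d:ℤ) ≠ 0 := by exact_mod_cast hd.ne'
  have h4 := mul_right_cancel₀ hd' h3
  norm_num at h4
  exact_mod_cast h4

theorem relabel_winding (n d : ℕ) (hn : 0 < n) (hd : 0 < d) (g : ℤ → ℤ)
    (hgper : ∀ m : ℤ, g (m + (n:ℤ)) = g m + (n:ℤ))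
    (hgbd : ∀ m : ℤ, m ≤ g m ∧ g m ≤ m + (n:ℤ))
    (hginj : Function.Injective g)
    (O : Finset ℤ) (hOsub : ∀ x ∈ O, 0 ≤ x ∧ x < (n:ℤ)) (hOne : O.Nonempty)
    (φ g₁ : ℤ → ℤ) (hmono : StrictMono φ) (hper : ∀ m : ℤ, φ (m + (d:ℤ)) = φ m + (n:ℤ))
    (hrange : Set.range φ = {m : ℤ | m % (n:ℤ) ∈ O}) (hcomm : ∀ m, g (φ m) = φ (g₁ m)) :
    winding d g₁
      = ((Finset.Icc 1 (n:ℤ)).filter (fun m => m % (n:ℤ) ∈ O ∧ (n:ℤ) < g m)).card := by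
  have hφinj : Function.Injective φ := hmono.injective
  have hφmem : ∀ m : ℤ, φ m % (n:ℤ) ∈ O := by
    intro m
    have : φ m ∈ Set.range φ := ⟨m, rfl⟩
    rw [hrange] at this; exact this
  have hbd1 : ∀ m : ℤ, m ≤ g₁ m ∧ g₁ m ≤ m + (d:ℤ) := by
    intro m
    have h1 : φ m ≤ φ (g₁ m) := by rw [← hcomm]; exact (hgbd (φ m)).1
    have h2 : φ (g₁ m) ≤ φ (m + (d:ℤ)) := by rw [← hcomm, hper]; exact (hgbd (φ m)).2
    exact ⟨hmono.le_iff_le.mp h1, hmono.le_iff_le.mp h2⟩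
  have hper1 : ∀ m : ℤ, g₁ (m + (d:ℤ)) = g₁ m + (d:ℤ) := by
    intro m
    apply hφinj
    rw [← hcomm, hper, hgper, hcomm, ← hper]
  have hinj1 : Function.Injective g₁ := by
    intro m1 m2 h12
    have : g (φ m1) = g (φ m2) := by rw [hcomm, hcomm, h12]
    exact hφinj (hginj this)
  -- the set T of elements of S in the fundamental window [1, n]
  set Tf := (Finset.Icc 1 (n:ℤ)).filter (fun m => m % (n:ℤ) ∈ O) with hTf
  have hTfne : Tf.Nonempty := by
    obtain ⟨x, hx⟩ := hOne
    obtain ⟨hx0, hxn⟩ := hOsub x hx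
    refine ⟨if x = 0 then (n:ℤ) else x, ?_⟩
    rw [hTf, Finset.mem_filter, Finset.mem_Icc]
    split_ifs with h0
    · subst h0
      constructor
      · omega
      · rw [Int.emod_self]; exact hx
    · constructor
      · omega
      · rw [Int.emod_eq_of_lt (by omega) hxn]; exact hx
  set mn := Tf.min' hTfne with hmn
  have hmnTf : mn ∈ Tf := Tf.min'_mem hTfne
  have hmnIcc : 1 ≤ mn ∧ mn ≤ (n:ℤ) := by
    have := hmnTf; rw [hTf, Finset.mem_filter, Finset.mem_Icc] at this; exact ⟨this.1.1, this.1.2⟩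
  have hmnS : mn ∈ Set.range φ := by
    rw [hrange]
    have := hmnTf; rw [hTf, Finset.mem_filter] at this; exact this.2
  obtain ⟨m₀, hm₀⟩ := hmnS
  set c := m₀ - 1 with hc
  have hφc1 : φ (c + 1) = mn := by rw [hc]; rw [show m₀ - 1 + 1 = m₀ by ring]; exact hm₀
  -- T is the φ-image of the window (c, c+d]
  have himg : Tf = (Finset.Icc (c+1) (c+(d:ℤ))).image φ := by
    apply Finset.Subset.antisymm
    · intro t ht
      rw [hTf, Finset.mem_filter, Finset.mem_Icc] at ht
      have htS : t ∈ Set.range φ := by rw [hrange]; exact ht.2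
      obtain ⟨m, hm⟩ := htS
      have hmlb : c + 1 ≤ m := by
        by_contra hlt
        push_neg at hlt
        have : φ m < φ (c+1) := hmono (by omega)
        rw [hφc1, hm] at this
        have := Tf.min'_le t (by rw [hTf, Finset.mem_filter, Finset.mem_Icc]; exact ht)
        omega
      have hmub : m ≤ c + d := by
        by_contra hgt
        push_neg at hgt
        have : φ (c+1+(d:ℤ)) ≤ φ m := hmono.monotone (by omega)
        rw [hper, hφc1, hm] at this
        omega
      exact Finset.mem_image.mpr ⟨m, Finset.mem_Icc.mpr ⟨hmlb, hmub⟩, hm⟩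
    · intro t ht
      obtain ⟨m, hm, rfl⟩ := Finset.mem_image.mp ht
      rw [Finset.mem_Icc] at hm
      have hlb : mn ≤ φ m := by rw [← hφc1]; exact hmono.monotone hm.1
      have hub2 : φ m < mn + n := by
        have : φ m < φ (c+1+(d:ℤ)) := hmono (by omega)
        rw [hper, hφc1] at this; exact this
      have hub : φ m ≤ (n:ℤ) := by
        by_contra hgt
        push_neg at hgt
        have hy : φ (m - (d:ℤ)) = φ m - n := by
          have := hper (m - (d:ℤ))
          rw [show m - (d:ℤ) + (d:ℤ) = m by ring] at this
          omega
        have hyTf : φ (m - (d:ℤ)) ∈ Tf := by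
          rw [hTf, Finset.mem_filter, Finset.mem_Icc]
          exact ⟨⟨by omega, by omega⟩, hφmem _⟩
        have := Tf.min'_le _ hyTf
        omega
      rw [hTf, Finset.mem_filter, Finset.mem_Icc]
      exact ⟨⟨by omega, hub⟩, hφmem m⟩
  -- the cutoff correspondence on the window
  have hiff : ∀ m : ℤ, m ∈ Finset.Icc (c+1) (c+(d:ℤ)) →
      ((c+(d:ℤ) < g₁ m) ↔ ((n:ℤ) < g (φ m))) := by
    intro m hm
    rw [Finset.mem_Icc] at hm
    constructor
    · intro hcut
      by_contra hle
      push_neg at hle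
      have h1 : φ (c+1) ≤ φ m := hmono.monotone (by omega)
      have hval : g (φ m) ∈ Tf := by
        rw [hTf, Finset.mem_filter, Finset.mem_Icc]
        refine ⟨⟨by have := (hgbd (φ m)).1; omega, hle⟩, ?_⟩
        rw [hcomm]; exact hφmem _
      rw [himg] at hval
      obtain ⟨m', hm', hval'⟩ := Finset.mem_image.mp hval
      rw [hcomm] at hval'
      have : m' = g₁ m := hφinj hval'
      rw [Finset.mem_Icc] at hm'
      omega
    · intro hgt
      by_contra hle
      push_neg at hle
      have h2 : φ (g₁ m) ≤ φ (c + (d:ℤ)) := hmono.monotone hle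
      have h3 : φ (c + (d:ℤ)) ≤ (n:ℤ) := by
        have : φ (c + (d:ℤ)) ∈ Tf := by
          rw [himg]
          exact Finset.mem_image.mpr ⟨c + (d:ℤ), Finset.mem_Icc.mpr ⟨by omega, le_refl _⟩, rfl⟩
        rw [hTf, Finset.mem_filter, Finset.mem_Icc] at this
        exact this.1.2
      rw [← hcomm] at h2
      omega
  -- assemble
  have hwind : winding d g₁
      = ((Finset.Icc (c+1) (c+(d:ℤ))).filter (fun m => c+(d:ℤ) < g₁ m)).card := by
    rw [winding]
    exact (card_window_const hd hper1 hbd1 hinj1 c).symm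
  have himg2 : ((Finset.Icc (c+1) (c+(d:ℤ))).filter (fun m => c+(d:ℤ) < g₁ m)).image φ
      = Tf.filter (fun t => (n:ℤ) < g t) := by
    apply Finset.Subset.antisymm
    · intro x hx
      obtain ⟨m, hm, rfl⟩ := Finset.mem_image.mp hx
      rw [Finset.mem_filter] at hm
      rw [Finset.mem_filter]
      refine ⟨?_, (hiff m hm.1).mp hm.2⟩
      rw [himg]
      exact Finset.mem_image.mpr ⟨m, hm.1, rfl⟩
    · intro t ht
      rw [Finset.mem_filter] at ht
      have := ht.1
      rw [himg] at this
      obtain ⟨m, hm, rfl⟩ := Finset.mem_image.mp this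
      refine Finset.mem_image.mpr ⟨m, ?_, rfl⟩
      rw [Finset.mem_filter]
      exact ⟨hm, (hiff m hm).mpr ht.2⟩
  have hcard2 : ((Finset.Icc (c+1) (c+(d:ℤ))).filter (fun m => c+(d:ℤ) < g₁ m)).card
      = (Tf.filter (fun t => (n:ℤ) < g t)).card := by
    rw [← himg2]
    exact (Finset.card_image_of_injective _ hφinj).symm
  rw [hwind, hcard2, hTf, Finset.filter_filter]

lemma emod_inj_Icc {n : ℕ} {a b : ℤ} (ha : 1 ≤ a ∧ a ≤ n) (hb : 1 ≤ b ∧ b ≤ n)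
    (h : a % (n:ℤ) = b % (n:ℤ)) : a = b := by
  have hna : a % (n:ℤ) = if a = n then 0 else a := by
    split_ifs with h1
    · subst h1; exact Int.emod_self
    · exact Int.emod_eq_of_lt (by omega) (by omega)
  have hnb : b % (n:ℤ) = if b = n then 0 else b := by
    split_ifs with h1
    · subst h1; exact Int.emod_self
    · exact Int.emod_eq_of_lt (by omega) (by omega)
  rw [hna, hnb] at h
  split_ifs at h <;> omega

lemma card_Tf {n : ℕ} (hn : 0 < n) (O : Finset ℤ) (hOsub : ∀ x ∈ O, 0 ≤ x ∧ x < (n:ℤ)) :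
    ((Finset.Icc 1 (n:ℤ)).filter (fun m => m % (n:ℤ) ∈ O)).card = O.card := by
  apply Finset.card_bij (fun m _ => m % (n:ℤ))
  · intro a ha
    rw [Finset.mem_filter] at ha; exact ha.2
  · intro a ha b hb hab
    rw [Finset.mem_filter, Finset.mem_Icc] at ha hb
    exact emod_inj_Icc ha.1 hb.1 hab
  · intro x hx
    obtain ⟨hx0, hxn⟩ := hOsub x hx
    refine ⟨if x = 0 then (n:ℤ) else x, ?_, ?_⟩
    · rw [Finset.mem_filter, Finset.mem_Icc]
      split_ifs with h0
      · subst h0; rw [Int.emod_self]; exact ⟨⟨by omega, le_refl _⟩, hx⟩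
      · rw [Int.emod_eq_of_lt (by omega) hxn]; exact ⟨⟨by omega, by omega⟩, hx⟩
    · split_ifs with h0
      · subst h0; rw [Int.emod_self]
      · rw [Int.emod_eq_of_lt (by omega) hxn]

theorem relabel_exists (n : ℕ) (hn : 0 < n) (g : ℤ → ℤ)
    (O : Finset ℤ) (hOsub : ∀ x ∈ O, 0 ≤ x ∧ x < (n:ℤ)) (hOne : O.Nonempty)
    (hclosed : ∀ m : ℤ, m % (n:ℤ) ∈ O → g m % (n:ℤ) ∈ O) :
    ∃ g₁ : ℤ → ℤ, IsRelabelOn n g {m : ℤ | m % (n:ℤ) ∈ O} O.card g₁ := by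
  have hd : 0 < O.card := Finset.card_pos.mpr hOne
  set d := O.card with hdd
  have hdz : (d:ℤ) ≠ 0 := by exact_mod_cast hd.ne'
  have hdz' : (0:ℤ) < d := by exact_mod_cast hd
  have hTcard : ((Finset.Icc 1 (n:ℤ)).filter (fun m => m % (n:ℤ) ∈ O)).card = d :=
    card_Tf hn O hOsub
  set e := ((Finset.Icc 1 (n:ℤ)).filter (fun m => m % (n:ℤ) ∈ O)).orderIsoOfFin hTcard with he
  have hE1 : ∀ r : Fin d, 1 ≤ ((e r : ℤ)) ∧ ((e r : ℤ)) ≤ n ∧ ((e r : ℤ)) % n ∈ O := by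
    intro r
    have h2 : ((e r : ℤ)) ∈ (Finset.Icc 1 (n:ℤ)).filter (fun m => m % (n:ℤ) ∈ O) := (e r).2
    rw [Finset.mem_filter, Finset.mem_Icc] at h2
    exact ⟨h2.1.1, h2.1.2, h2.2⟩
  have hEmono : ∀ r s : Fin d, r < s → ((e r : ℤ)) < ((e s : ℤ)) := by
    intro r s hrs
    exact_mod_cast e.strictMono hrs
  have hidx : ∀ m : ℤ, ((m-1) % (d:ℤ)).toNat < d := by
    intro m
    have h1 : 0 ≤ (m-1) % (d:ℤ) := Int.emod_nonneg _ hdz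
    have h2 : (m-1) % (d:ℤ) < d := Int.emod_lt_of_pos _ hdz'
    omega
  set φ : ℤ → ℤ :=
    fun m => ((e ⟨((m-1) % (d:ℤ)).toNat, hidx m⟩ : ℤ)) + ((m-1) / (d:ℤ)) * (n:ℤ) with hφ
  have hdecomp : ∀ m : ℤ, m - 1 = (d:ℤ) * ((m-1)/(d:ℤ)) + (m-1) % (d:ℤ) :=
    fun m => (Int.mul_ediv_add_emod (m-1) (d:ℤ)).symm
  have hcomm' : ∀ q : ℤ, (d:ℤ) * q = q * (d:ℤ) := fun q => mul_comm _ _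
  have hcommn : ∀ q : ℤ, (n:ℤ) * q = q * (n:ℤ) := fun q => mul_comm _ _
  -- periodicity
  have hφper : ∀ m : ℤ, φ (m + (d:ℤ)) = φ m + (n:ℤ) := by
    intro m
    have f1 : (m + (d:ℤ) - 1) % (d:ℤ) = (m-1) % (d:ℤ) := by
      rw [show m + (d:ℤ) - 1 = (m-1) + 1*(d:ℤ) by ring, Int.add_mul_emod_self_right]
    have f2 : (m + (d:ℤ) - 1) / (d:ℤ) = (m-1) / (d:ℤ) + 1 := by
      rw [show m + (d:ℤ) - 1 = (m-1) + 1*(d:ℤ) by ring, Int.add_mul_ediv_right _ _ hdz]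
    have e4 : (⟨((m + (d:ℤ) - 1) % (d:ℤ)).toNat, hidx (m + (d:ℤ))⟩ : Fin d)
        = ⟨((m-1) % (d:ℤ)).toNat, hidx m⟩ := by
      apply Fin.ext; simp only; rw [f1]
    show ((e ⟨((m + (d:ℤ) - 1) % (d:ℤ)).toNat, hidx (m + (d:ℤ))⟩ : ℤ))
        + ((m + (d:ℤ) - 1) / (d:ℤ)) * (n:ℤ)
      = ((e ⟨((m-1) % (d:ℤ)).toNat, hidx m⟩ : ℤ)) + ((m-1) / (d:ℤ)) * (n:ℤ) + (n:ℤ)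
    rw [e4, f2]; ring
  -- strict monotonicity
  have hφmono : StrictMono φ := by
    apply strictMono_int_of_lt_succ
    intro m
    have hr0 : 0 ≤ (m-1) % (d:ℤ) := Int.emod_nonneg _ hdz
    have hrd : (m-1) % (d:ℤ) < d := Int.emod_lt_of_pos _ hdz'
    have hmd := hdecomp m
    have hcq := hcomm' ((m-1)/(d:ℤ))
    by_cases hcase : (m-1) % (d:ℤ) + 1 < d
    · have f1 : (m + 1 - 1) % (d:ℤ) = (m-1) % (d:ℤ) + 1 := by
        rw [show m + 1 - 1 = ((m-1) % (d:ℤ) + 1) + ((m-1)/(d:ℤ))*(d:ℤ) by omega,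
            Int.add_mul_emod_self_right, Int.emod_eq_of_lt (by omega) (by omega)]
      have f2 : (m + 1 - 1) / (d:ℤ) = (m-1) / (d:ℤ) := by
        rw [show m + 1 - 1 = ((m-1) % (d:ℤ) + 1) + ((m-1)/(d:ℤ))*(d:ℤ) by omega,
            Int.add_mul_ediv_right _ _ hdz,
            Int.ediv_eq_zero_of_lt (by omega) (by omega)]
        ring
      have e4 : (⟨((m + 1 - 1) % (d:ℤ)).toNat, hidx (m+1)⟩ : Fin d)
          = ⟨((m-1) % (d:ℤ) + 1).toNat, by omega⟩ := by
        apply Fin.ext; simp only; rw [f1]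
      have hlt : (⟨((m-1) % (d:ℤ)).toNat, hidx m⟩ : Fin d)
          < ⟨((m-1) % (d:ℤ) + 1).toNat, by omega⟩ := by
        simp only [Fin.mk_lt_mk]; omega
      have := hEmono _ _ hlt
      show ((e ⟨((m-1) % (d:ℤ)).toNat, hidx m⟩ : ℤ)) + ((m-1) / (d:ℤ)) * (n:ℤ)
        < ((e ⟨((m + 1 - 1) % (d:ℤ)).toNat, hidx (m+1)⟩ : ℤ)) + ((m + 1 - 1) / (d:ℤ)) * (n:ℤ)
      rw [e4, f2]
      omega
    · -- wrap-around case
      have hreq : (m-1) % (d:ℤ) + 1 = d := by omega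
      have f1 : (m + 1 - 1) % (d:ℤ) = 0 := by
        rw [show m + 1 - 1 = 0 + ((m-1)/(d:ℤ) + 1)*(d:ℤ) by
              have h6 : ((m-1)/(d:ℤ) + 1)*(d:ℤ) = ((m-1)/(d:ℤ))*(d:ℤ) + (d:ℤ) := by ring
              omega,
            Int.add_mul_emod_self_right, Int.zero_emod]
      have f2 : (m + 1 - 1) / (d:ℤ) = (m-1) / (d:ℤ) + 1 := by
        rw [show m + 1 - 1 = 0 + ((m-1)/(d:ℤ) + 1)*(d:ℤ) by
              have h6 : ((m-1)/(d:ℤ) + 1)*(d:ℤ) = ((m-1)/(d:ℤ))*(d:ℤ) + (d:ℤ) := by ring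
              omega,
            Int.add_mul_ediv_right _ _ hdz, Int.zero_ediv, zero_add]
      have e4 : (⟨((m + 1 - 1) % (d:ℤ)).toNat, hidx (m+1)⟩ : Fin d)
          = ⟨0, hd⟩ := by
        apply Fin.ext; simp only; rw [f1]; simp
      have h1 := (hE1 ⟨((m-1) % (d:ℤ)).toNat, hidx m⟩).2.1
      have h2 := (hE1 ⟨0, hd⟩).1
      show ((e ⟨((m-1) % (d:ℤ)).toNat, hidx m⟩ : ℤ)) + ((m-1) / (d:ℤ)) * (n:ℤ)
        < ((e ⟨((m + 1 - 1) % (d:ℤ)).toNat, hidx (m+1)⟩ : ℤ)) + ((m + 1 - 1) / (d:ℤ)) * (n:ℤ)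
      rw [e4, f2]
      have hnn : ((m-1) / (d:ℤ) + 1) * (n:ℤ) = ((m-1)/(d:ℤ)) * (n:ℤ) + (n:ℤ) := by ring
      omega
  -- residues of φ lie in O
  have hφresid : ∀ m : ℤ, φ m % (n:ℤ) ∈ O := by
    intro m
    have : φ m % (n:ℤ) = ((e ⟨((m-1) % (d:ℤ)).toNat, hidx m⟩ : ℤ)) % (n:ℤ) := by
      show (((e ⟨((m-1) % (d:ℤ)).toNat, hidx m⟩ : ℤ)) + ((m-1) / (d:ℤ)) * (n:ℤ)) % (n:ℤ) = _
      rw [Int.add_mul_emod_self_right]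
    rw [this]
    exact (hE1 _).2.2
  -- range of φ
  have hrange : Set.range φ = {m : ℤ | m % (n:ℤ) ∈ O} := by
    apply Set.eq_of_subset_of_subset
    · rintro x ⟨m, rfl⟩
      exact Set.mem_setOf.mpr (hφresid m)
    · intro m hm
      have hmO : m % (n:ℤ) ∈ O := hm
      have hx0 : 0 ≤ m % (n:ℤ) := Int.emod_nonneg _ (by exact_mod_cast hn.ne')
      have hxn : m % (n:ℤ) < n := Int.emod_lt_of_pos _ (by exact_mod_cast hn)
      set t : ℤ := if m % (n:ℤ) = 0 then (n:ℤ) else m % (n:ℤ) with htd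
      have htTf : t ∈ (Finset.Icc 1 (n:ℤ)).filter (fun m => m % (n:ℤ) ∈ O) := by
        rw [Finset.mem_filter, Finset.mem_Icc, htd]
        split_ifs with h0
        · rw [Int.emod_self]; exact ⟨⟨by omega, le_refl _⟩, by rw [← h0]; exact hmO⟩
        · rw [Int.emod_eq_of_lt (by omega) hxn]; exact ⟨⟨by omega, by omega⟩, hmO⟩
      have htm : t % (n:ℤ) = m % (n:ℤ) := by
        rw [htd]; split_ifs with h0
        · rw [Int.emod_self, h0]
        · exact Int.emod_eq_of_lt (by omega) hxn
      obtain ⟨r, hr⟩ := e.surjective ⟨t, htTf⟩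
      have hrt : ((e r : ℤ)) = t := by rw [hr]
      have hdvd : (n:ℤ) ∣ m - t := Int.ModEq.dvd htm
      obtain ⟨q, hq⟩ := hdvd
      refine ⟨(r.val : ℤ) + 1 + q * (d:ℤ), ?_⟩
      have f1 : ((r.val : ℤ) + 1 + q * (d:ℤ) - 1) % (d:ℤ) = (r.val : ℤ) := by
        rw [show (r.val : ℤ) + 1 + q * (d:ℤ) - 1 = (r.val : ℤ) + q*(d:ℤ) by ring,
            Int.add_mul_emod_self_right, Int.emod_eq_of_lt (by positivity) (by exact_mod_cast r.isLt)]
      have f2 : ((r.val : ℤ) + 1 + q * (d:ℤ) - 1) / (d:ℤ) = q := by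
        rw [show (r.val : ℤ) + 1 + q * (d:ℤ) - 1 = (r.val : ℤ) + q*(d:ℤ) by ring,
            Int.add_mul_ediv_right _ _ hdz,
            Int.ediv_eq_zero_of_lt (by positivity) (by exact_mod_cast r.isLt), zero_add]
      have e4 : (⟨(((r.val : ℤ) + 1 + q * (d:ℤ) - 1) % (d:ℤ)).toNat,
          hidx ((r.val : ℤ) + 1 + q * (d:ℤ))⟩ : Fin d) = r := by
        apply Fin.ext; simp only; rw [f1]; simp
      show ((e ⟨(((r.val : ℤ) + 1 + q * (d:ℤ) - 1) % (d:ℤ)).toNat,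
          hidx ((r.val : ℤ) + 1 + q * (d:ℤ))⟩ : ℤ))
        + (((r.val : ℤ) + 1 + q * (d:ℤ) - 1) / (d:ℤ)) * (n:ℤ) = m
      rw [e4, f2, hrt]
      have := hcommn q
      omega
  -- define g₁ by transport
  have hSrange : ∀ m : ℤ, ∃ a : ℤ, φ a = g (φ m) := by
    intro m
    have h1 : g (φ m) ∈ Set.range φ := by
      rw [hrange]
      exact Set.mem_setOf.mpr (hclosed _ (hφresid m))
    exact h1
  refine ⟨fun m => Function.invFun φ (g (φ m)), φ, hφmono, hφper, hrange, ?_⟩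
  intro m
  exact (Function.invFun_eq (hSrange m)).symm

theorem two_orbits {n : ℕ} (hn : 0 < n) {f : ℤ → ℤ}
    (hfper : ∀ m : ℤ, f (m + (n:ℤ)) = f m + (n:ℤ)) (hfinj : Function.Injective f)
    (hcyc : ∀ y : ℤ, ∃ r : ℕ, r < n ∧ f^[r] 0 % (n:ℤ) = y % (n:ℤ))
    {g : ℤ → ℤ} (hgper : ∀ m : ℤ, g (m + (n:ℤ)) = g m + (n:ℤ))
    {i j : ℤ} (hne : i % (n:ℤ) ≠ j % (n:ℤ))
    (hgi : g i % (n:ℤ) = f j % (n:ℤ))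
    (hgj : g j % (n:ℤ) = f i % (n:ℤ))
    (hgo : ∀ x : ℤ, x % (n:ℤ) ≠ i % (n:ℤ) → x % (n:ℤ) ≠ j % (n:ℤ) → g x = f x) :
    (orbitF n g i).card + (orbitF n g j).card = n ∧
    Disjoint (orbitF n g i) (orbitF n g j) ∧
    orbitF n g i ∪ orbitF n g j = Finset.Ico (0:ℤ) (n:ℤ) := by
  have hnz : ((n:ℤ)) ≠ 0 := by exact_mod_cast hn.ne'
  have hnz' : (0:ℤ) < n := by exact_mod_cast hn
  set F : ℕ → ℤ := fun r => f^[r] 0 % (n:ℤ) with hF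
  have hFmod : ∀ r, F r % (n:ℤ) = F r := fun r => emod_emod_self _ _
  have hFsucc : ∀ r, F (r+1) = f (F r) % (n:ℤ) := fun r => sq_succ hfper 0 r
  have hFshift : ∀ (x : ℤ) (r : ℕ), x % (n:ℤ) = F r → f x % (n:ℤ) = F (r+1) := by
    intro x r h
    rw [hFsucc]
    exact emod_apply_congr hfper (by rw [hFmod]; exact h)
  have hFbounds : ∀ r, 0 ≤ F r ∧ F r < (n:ℤ) :=
    fun r => ⟨Int.emod_nonneg _ hnz, Int.emod_lt_of_pos _ hnz'⟩
  have himgF : (Finset.range n).image F = Finset.Ico (0:ℤ) (n:ℤ) := by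
    apply Finset.Subset.antisymm
    · intro x hx
      obtain ⟨r, _, rfl⟩ := Finset.mem_image.mp hx
      rw [Finset.mem_Ico]; exact hFbounds r
    · intro y hy
      rw [Finset.mem_Ico] at hy
      obtain ⟨r, hr, hry⟩ := hcyc y
      rw [Int.emod_eq_of_lt hy.1 hy.2] at hry
      exact Finset.mem_image.mpr ⟨r, Finset.mem_range.mpr hr, hry⟩
  have hcardF : ((Finset.range n).image F).card = (Finset.range n).card := by
    rw [himgF, Int.card_Ico, Finset.card_range]; simp
  have hFinjOn := Finset.injOn_of_card_image_eq hcardF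
  have hFinj_lt : ∀ r1 r2, r1 < n → r2 < n → F r1 = F r2 → r1 = r2 := by
    intro r1 r2 h1 h2 h
    exact hFinjOn (by simpa using h1) (by simpa using h2) h
  have hFne : F n = F 0 := by
    have hFn_mem : F n ∈ Finset.Ico (0:ℤ) (n:ℤ) := Finset.mem_Ico.mpr (hFbounds n)
    rw [← himgF] at hFn_mem
    obtain ⟨r0, hr0, hr0e⟩ := Finset.mem_image.mp hFn_mem
    rw [Finset.mem_range] at hr0
    by_cases h0 : r0 = 0
    · rw [← hr0e, h0]
    · have hpeel := sq_peel_iter hfper hfinj 0 r0 (n - r0) 0 ?_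
      · have h1 : n - r0 = 0 := hFinj_lt _ _ (by omega) hn hpeel
        omega
      · have h2 : n - r0 + r0 = n := by omega
        have h3 : 0 + r0 = r0 := by omega
        rw [h2, h3]
        exact hr0e.symm
  have hFmodn : ∀ r, F r = F (r % n) := sq_mod_per hfper 0 hn hFne
  have hFinj_mod : ∀ r1 r2, F r1 = F r2 → r1 % n = r2 % n := by
    intro r1 r2 h
    exact hFinj_lt (r1 % n) (r2 % n) (Nat.mod_lt _ hn) (Nat.mod_lt _ hn)
      (by rw [← hFmodn, ← hFmodn]; exact h)
  -- positions of i and j on the cycle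
  obtain ⟨ri, hri_lt, hFri⟩ := hcyc i
  obtain ⟨rj, hrj_lt, hFrj⟩ := hcyc j
  have hFri : F ri = i % (n:ℤ) := hFri
  have hFrj : F rj = j % (n:ℤ) := hFrj
  have hrine : ri ≠ rj := by
    intro h; rw [h, hFrj] at hFri; exact hne hFri.symm  -- check direction
  -- the distance u from j to i along the cycle
  set u := (ri + n - rj) % n with hu
  have hu_mod : u % n = (ri + n - rj) % n := Nat.mod_mod_of_dvd _ dvd_rfl
  have hu_pos : 0 < u := by
    rcases Nat.eq_zero_or_pos u with h0 | h; swap; exact h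
    exfalso
    have hdvd : n ∣ (ri + n - rj) := Nat.dvd_of_mod_eq_zero (by rw [← hu]; exact h0)
    obtain ⟨q, hq⟩ := hdvd
    rcases q with _ | _ | q
    · omega
    · simp at hq; omega
    · have h2n : 2*n ≤ n*(q+1+1) := by nlinarith
      omega
  have hu_lt : u < n := Nat.mod_lt _ hn
  have hrju : (rj + u) % n = ri := by
    have h1 : (rj + u) % n = (rj + (ri + n - rj)) % n := by
      conv_lhs => rw [Nat.add_mod, hu_mod, ← Nat.add_mod]
    rw [h1, show rj + (ri + n - rj) = ri + n by omega, Nat.add_mod_right, Nat.mod_eq_of_lt hri_lt]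
  have hFrju : F (rj + u) = i % (n:ℤ) := by
    rw [hFmodn (rj + u), hrju, hFri]
  set v := n - u with hv
  have hv_pos : 0 < v := by omega
  have huv : u + v = n := by omega
  have hriv : (ri + v) % n = rj := by
    have hA : ((ri + v) + u) % n = (rj + u) % n := by
      rw [show (ri + v) + u = ri + n by omega, Nat.add_mod_right, hrju, Nat.mod_eq_of_lt hri_lt]
    have hB : ri + v ≡ rj [MOD n] := Nat.ModEq.add_right_cancel' u hA
    rw [Nat.ModEq] at hB
    rw [hB, Nat.mod_eq_of_lt hrj_lt]
  have hFriv : F (ri + v) = j % (n:ℤ) := by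
    rw [hFmodn (ri + v), hriv, hFrj]
  -- the orbit sequence of i
  set G : ℕ → ℤ := fun r => g^[r] i % (n:ℤ) with hG
  have hG0 : G 0 = i % (n:ℤ) := by simp [hG]
  have hGmain : ∀ r : ℕ, 1 ≤ r → r ≤ u → G r = F (rj + r) := by
    intro r
    induction r with
    | zero => intro h; omega
    | succ r ih =>
        intro h1 h2
        by_cases hr0 : r = 0
        · subst hr0
          have hG1 : G 1 = g i % (n:ℤ) := by simp [hG]
          show G 1 = F (rj + 1)
          rw [hG1, hgi]
          exact hFshift j rj (by rw [hFrj])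
        · have ihr := ih (by omega) (by omega)
          have hGs : G (r+1) = g (G r) % (n:ℤ) := sq_succ hgper i r
          rw [hGs, ihr]
          have hne1 : F (rj + r) % (n:ℤ) ≠ i % (n:ℤ) := by
            rw [hFmod]
            intro hcon
            rw [← hFrju] at hcon
            have := hFinj_mod _ _ hcon
            have h3 : r ≡ u [MOD n] := Nat.ModEq.add_left_cancel' rj this
            rw [Nat.ModEq, Nat.mod_eq_of_lt (by omega), Nat.mod_eq_of_lt hu_lt] at h3
            omega
          have hne2 : F (rj + r) % (n:ℤ) ≠ j % (n:ℤ) := by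
            rw [hFmod]
            intro hcon
            rw [← hFrj] at hcon
            have := hFinj_mod _ _ hcon
            have h3 : rj + r ≡ rj + 0 [MOD n] := by
              rw [Nat.ModEq]; simpa using this
            have h4 : r ≡ 0 [MOD n] := Nat.ModEq.add_left_cancel' rj h3
            rw [Nat.ModEq, Nat.mod_eq_of_lt (by omega), Nat.zero_mod] at h4
            omega
          rw [hgo _ hne1 hne2]
          have := hFshift (F (rj + r)) (rj + r) (hFmod _)
          rw [this, Nat.add_assoc]
  have hGu : g^[u] i % (n:ℤ) = g^[0] i % (n:ℤ) := by
    have h1 : G u = F (rj + u) := hGmain u hu_pos le_rfl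
    have h2 : G u = G 0 := by rw [h1, hFrju, hG0]
    exact h2
  have hGmodu : ∀ r, G r = G (r % u) := sq_mod_per hgper i hu_pos hGu
  -- the orbit sequence of j
  set H : ℕ → ℤ := fun r => g^[r] j % (n:ℤ) with hH
  have hH0 : H 0 = j % (n:ℤ) := by simp [hH]
  have hHmain : ∀ r : ℕ, 1 ≤ r → r ≤ v → H r = F (ri + r) := by
    intro r
    induction r with
    | zero => intro h; omega
    | succ r ih =>
        intro h1 h2
        by_cases hr0 : r = 0
        · subst hr0
          have hH1 : H 1 = g j % (n:ℤ) := by simp [hH]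
          show H 1 = F (ri + 1)
          rw [hH1, hgj]
          exact hFshift i ri (by rw [hFri])
        · have ihr := ih (by omega) (by omega)
          have hHs : H (r+1) = g (H r) % (n:ℤ) := sq_succ hgper j r
          rw [hHs, ihr]
          have hne1 : F (ri + r) % (n:ℤ) ≠ i % (n:ℤ) := by
            rw [hFmod]
            intro hcon
            rw [← hFri] at hcon
            have := hFinj_mod _ _ hcon
            have h3 : ri + r ≡ ri + 0 [MOD n] := by
              rw [Nat.ModEq]; simpa using this
            have h4 : r ≡ 0 [MOD n] := Nat.ModEq.add_left_cancel' ri h3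
            rw [Nat.ModEq, Nat.mod_eq_of_lt (by omega), Nat.zero_mod] at h4
            omega
          have hne2 : F (ri + r) % (n:ℤ) ≠ j % (n:ℤ) := by
            rw [hFmod]
            intro hcon
            rw [← hFriv] at hcon
            have := hFinj_mod _ _ hcon
            have h3 : r ≡ v [MOD n] := Nat.ModEq.add_left_cancel' ri this
            rw [Nat.ModEq, Nat.mod_eq_of_lt (by omega), Nat.mod_eq_of_lt (by omega)] at h3
            omega
          rw [hgo _ hne1 hne2]
          have := hFshift (F (ri + r)) (ri + r) (hFmod _)
          rw [this, Nat.add_assoc]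
  have hHv : g^[v] j % (n:ℤ) = g^[0] j % (n:ℤ) := by
    have h1 : H v = F (ri + v) := hHmain v hv_pos le_rfl
    have h2 : H v = H 0 := by rw [h1, hFriv, hH0]
    exact h2
  have hHmodv : ∀ r, H r = H (r % v) := sq_mod_per hgper j hv_pos hHv
  -- orbit descriptions
  have hO1 : orbitF n g i = (Finset.Icc 1 u).image (fun s => F (rj + s)) := by
    apply Finset.Subset.antisymm
    · intro x hx
      rw [orbitF, Finset.mem_image] at hx
      obtain ⟨r, hr, rfl⟩ := hx
      rw [Finset.mem_range] at hr
      have hx2 : g^[r] i % (n:ℤ) = G (r % u) := hGmodu r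
      by_cases h0 : r % u = 0
      · rw [hx2, h0]
        refine Finset.mem_image.mpr ⟨u, Finset.mem_Icc.mpr ⟨hu_pos, le_rfl⟩, ?_⟩
        rw [hFrju]; exact hG0.symm
      · refine Finset.mem_image.mpr ⟨r % u, Finset.mem_Icc.mpr
          ⟨by omega, le_of_lt (Nat.mod_lt _ hu_pos)⟩, ?_⟩
        rw [← hGmain (r % u) (by omega) (le_of_lt (Nat.mod_lt _ hu_pos))]
        exact hx2.symm
    · intro x hx
      obtain ⟨s, hs, rfl⟩ := Finset.mem_image.mp hx
      rw [Finset.mem_Icc] at hs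
      rw [← hGmain s hs.1 hs.2]
      rw [orbitF, Finset.mem_image]
      exact ⟨s, Finset.mem_range.mpr (by omega), rfl⟩
  have hO2 : orbitF n g j = (Finset.Icc 1 v).image (fun s => F (ri + s)) := by
    apply Finset.Subset.antisymm
    · intro x hx
      rw [orbitF, Finset.mem_image] at hx
      obtain ⟨r, hr, rfl⟩ := hx
      rw [Finset.mem_range] at hr
      have hx2 : g^[r] j % (n:ℤ) = H (r % v) := hHmodv r
      by_cases h0 : r % v = 0
      · rw [hx2, h0]
        refine Finset.mem_image.mpr ⟨v, Finset.mem_Icc.mpr ⟨hv_pos, le_rfl⟩, ?_⟩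
        rw [hFriv]; exact hH0.symm
      · refine Finset.mem_image.mpr ⟨r % v, Finset.mem_Icc.mpr
          ⟨by omega, le_of_lt (Nat.mod_lt _ hv_pos)⟩, ?_⟩
        rw [← hHmain (r % v) (by omega) (le_of_lt (Nat.mod_lt _ hv_pos))]
        exact hx2.symm
    · intro x hx
      obtain ⟨s, hs, rfl⟩ := Finset.mem_image.mp hx
      rw [Finset.mem_Icc] at hs
      rw [← hHmain s hs.1 hs.2]
      rw [orbitF, Finset.mem_image]
      exact ⟨s, Finset.mem_range.mpr (by omega), rfl⟩
  -- cardinalities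
  have hcard1 : (orbitF n g i).card = u := by
    rw [hO1, Finset.card_image_of_injOn, Nat.card_Icc]
    · omega
    · intro s1 hs1 s2 hs2 he
      rw [Finset.coe_Icc, Set.mem_Icc] at hs1 hs2
      have h5 := hFinj_mod _ _ he
      have h3 : s1 ≡ s2 [MOD n] := Nat.ModEq.add_left_cancel' rj h5
      rw [Nat.ModEq, Nat.mod_eq_of_lt (by omega), Nat.mod_eq_of_lt (by omega)] at h3
      exact h3
  have hcard2 : (orbitF n g j).card = v := by
    rw [hO2, Finset.card_image_of_injOn, Nat.card_Icc]
    · omega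
    · intro s1 hs1 s2 hs2 he
      rw [Finset.coe_Icc, Set.mem_Icc] at hs1 hs2
      have h5 := hFinj_mod _ _ he
      have h3 : s1 ≡ s2 [MOD n] := Nat.ModEq.add_left_cancel' ri h5
      rw [Nat.ModEq, Nat.mod_eq_of_lt (by omega), Nat.mod_eq_of_lt (by omega)] at h3
      exact h3
  -- disjointness
  have hdisj : Disjoint (orbitF n g i) (orbitF n g j) := by
    rw [Finset.disjoint_left]
    intro x hx1 hx2
    rw [hO1] at hx1
    rw [hO2] at hx2
    obtain ⟨s1, hs1, he1⟩ := Finset.mem_image.mp hx1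
    obtain ⟨s2, hs2, he2⟩ := Finset.mem_image.mp hx2
    rw [Finset.mem_Icc] at hs1 hs2
    have he : F (rj + s1) = F (ri + s2) := by rw [he1, he2]
    have h5 := hFinj_mod _ _ he
    have hmeq : ri ≡ rj + u [MOD n] := by
      rw [Nat.ModEq, Nat.mod_eq_of_lt hri_lt, hrju]
    have hA : (ri + s2) % n = ((rj + u) + s2) % n := Nat.ModEq.add_right s2 hmeq
    rw [hA] at h5
    have h6 : s1 ≡ u + s2 [MOD n] := by
      have : rj + s1 ≡ rj + (u + s2) [MOD n] := by
        rw [Nat.ModEq]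
        rw [show rj + (u + s2) = (rj + u) + s2 by omega]
        exact h5
      exact Nat.ModEq.add_left_cancel' rj this
    rw [Nat.ModEq, Nat.mod_eq_of_lt (by omega)] at h6
    by_cases hc : u + s2 = n
    · rw [hc, Nat.mod_self] at h6; omega
    · rw [Nat.mod_eq_of_lt (by omega)] at h6; omega
  -- union
  have hunion : orbitF n g i ∪ orbitF n g j = Finset.Ico (0:ℤ) (n:ℤ) := by
    apply Finset.eq_of_subset_of_card_le
    · intro x hx
      rcases Finset.mem_union.mp hx with h | h
      · rw [Finset.mem_Ico]; exact orbitF_bounds hn h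
      · rw [Finset.mem_Ico]; exact orbitF_bounds hn h
    · rw [Finset.card_union_of_disjoint hdisj, hcard1, hcard2, Int.card_Ico]
      simp; omega
  exact ⟨by rw [hcard1, hcard2]; omega, hdisj, hunion⟩

theorem resParams_fst {n : ℕ} (hn : 0 < n) (g : ℤ → ℤ)
    (hgper : ∀ m : ℤ, g (m + (n:ℤ)) = g m + (n:ℤ))
    (hgbd : ∀ m : ℤ, m ≤ g m ∧ g m ≤ m + (n:ℤ))
    (hginj : Function.Injective g) (a : ℤ) :
    (resParamsAt n g a).1
      = ((Finset.Icc 1 (n:ℤ)).filter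
          (fun m => m % (n:ℤ) ∈ orbitF n g a ∧ (n:ℤ) < g m)).card := by
  have hOne : (orbitF n g a).Nonempty := ⟨a % (n:ℤ), orbitF_mem_self hn g a⟩
  have hOsub : ∀ x ∈ orbitF n g a, 0 ≤ x ∧ x < (n:ℤ) := fun x hx => orbitF_bounds hn hx
  have hd : 0 < (orbitF n g a).card := Finset.card_pos.mpr hOne
  have hset : {k₁ : ℕ | ∃ g₁ : ℤ → ℤ,
      IsRelabelOn n g {m : ℤ | m % (n : ℤ) ∈ orbitF n g a} (orbitF n g a).card g₁ ∧
      winding (orbitF n g a).card g₁ = k₁}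
      = {((Finset.Icc 1 (n:ℤ)).filter
          (fun m => m % (n:ℤ) ∈ orbitF n g a ∧ (n:ℤ) < g m)).card} := by
    apply Set.eq_of_subset_of_subset
    · rintro k' ⟨g₁, ⟨φ, hmono, hper, hrange, hcomm⟩, rfl⟩
      exact relabel_winding n (orbitF n g a).card hn hd g hgper hgbd hginj
        (orbitF n g a) hOsub hOne φ g₁ hmono hper hrange hcomm
    · rintro k' hk'
      rw [Set.mem_singleton_iff] at hk'
      subst hk'
      obtain ⟨g₁, hrel⟩ := relabel_exists n hn g (orbitF n g a) hOsub hOne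
        (orbit_closed hn hgper hginj a)
      refine ⟨g₁, hrel, ?_⟩
      obtain ⟨φ, hmono, hper, hrange, hcomm⟩ := hrel
      exact relabel_winding n (orbitF n g a).card hn hd g hgper hgbd hginj
        (orbitF n g a) hOsub hOne φ g₁ hmono hper hrange hcomm
  show sInf {k₁ : ℕ | ∃ g₁ : ℤ → ℤ,
      IsRelabelOn n g {m : ℤ | m % (n : ℤ) ∈ orbitF n g a} (orbitF n g a).card g₁ ∧
      winding (orbitF n g a).card g₁ = k₁} = _
  rw [hset, csInf_singleton]

end Stmt7

open Stmt7 in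
/-- For `f ∈ Θ_{k,n}` and an inversion `(i,j)` of `f`, the parameters
`(k₁,n₁)`, `(k₂,n₂)` of the two cycles obtained by resolving the crossing satisfy
`k₁ + k₂ = k` and `n₁ + n₂ = n`. -/
theorem positroid_stmt7 (k n : ℕ) (f : ℤ → ℤ) (hf : IsTheta k n f) (i j : ℤ)
    (hij : (i, j) ∈ inversions n f) :
    (resParamsAt n (resolve n f i j) i).1 + (resParamsAt n (resolve n f i j) j).1 = k ∧
    (resParamsAt n (resolve n f i j) i).2 + (resParamsAt n (resolve n f i j) j).2 = n := by
  obtain ⟨⟨⟨hbij, hper⟩, hbd⟩, hcyc, hwind⟩ := hf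
  rw [inversions, Finset.mem_filter, Finset.mem_product] at hij
  obtain ⟨⟨hiIcc, hjIcc⟩, hijlt, hfji⟩ := hij
  rw [Finset.mem_Icc] at hiIcc hjIcc
  simp only at hiIcc hjIcc hijlt hfji
  obtain ⟨hi1, hin⟩ := hiIcc
  obtain ⟨hj1, hj3n⟩ := hjIcc
  have hn : 0 < n := by
    have h1 : (1:ℤ) ≤ (n:ℤ) := le_trans hi1 hin
    exact_mod_cast h1
  have hnz : ((n:ℤ)) ≠ 0 := by exact_mod_cast hn.ne'
  have hfinj : Function.Injective f := hbij.injective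
  -- i and j have distinct residues
  have hne : i % (n:ℤ) ≠ j % (n:ℤ) := by
    intro h
    have := shift_of_emod hper h.symm  -- f j = f i + (j - i)
    omega
  set g := resolve n f i j with hg
  -- value lemmas
  have hgval_i : ∀ x : ℤ, x % (n:ℤ) = i % (n:ℤ) → g x = f j + (x - i) := by
    intro x hx
    rw [hg, resolve, if_pos hx]
  have hgval_j : ∀ x : ℤ, x % (n:ℤ) = j % (n:ℤ) → g x = f i + (x - j) := by
    intro x hx
    rw [hg, resolve, if_neg (by rw [hx]; exact fun hc => hne hc.symm), if_pos hx]
  have hgval_o : ∀ x : ℤ, x % (n:ℤ) ≠ i % (n:ℤ) → x % (n:ℤ) ≠ j % (n:ℤ) → g x = f x := by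
    intro x h1 h2
    rw [hg, resolve, if_neg h1, if_neg h2]
  -- g is periodic
  have hgper : ∀ m : ℤ, g (m + (n:ℤ)) = g m + (n:ℤ) := by
    intro m
    have hm : (m + (n:ℤ)) % (n:ℤ) = m % (n:ℤ) := by
      rw [show m + (n:ℤ) = m + 1*(n:ℤ) by ring, Int.add_mul_emod_self_right]
    by_cases h1 : m % (n:ℤ) = i % (n:ℤ)
    · rw [hgval_i _ (by rw [hm]; exact h1), hgval_i _ h1]; ring
    · by_cases h2 : m % (n:ℤ) = j % (n:ℤ)
      · rw [hgval_j _ (by rw [hm]; exact h2), hgval_j _ h2]; ring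
      · rw [hgval_o _ (by rw [hm]; exact h1) (by rw [hm]; exact h2), hgval_o _ h1 h2]
        exact hper m
  -- g is bounded
  have hgbd : ∀ m : ℤ, m ≤ g m ∧ g m ≤ m + (n:ℤ) := by
    intro m
    have hbi := hbd i
    have hbj := hbd j
    by_cases h1 : m % (n:ℤ) = i % (n:ℤ)
    · rw [hgval_i _ h1]; omega
    · by_cases h2 : m % (n:ℤ) = j % (n:ℤ)
      · rw [hgval_j _ h2]; omega
      · rw [hgval_o _ h1 h2]; exact hbd m
  -- g is injective (g = f ∘ τ for the periodic swap τ)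
  set τ : ℤ → ℤ := fun m =>
    if m % (n:ℤ) = i % (n:ℤ) then m + (j - i)
    else if m % (n:ℤ) = j % (n:ℤ) then m + (i - j) else m with hτ
  have hmod_i : ∀ x : ℤ, x % (n:ℤ) = i % (n:ℤ) → (x + (j - i)) % (n:ℤ) = j % (n:ℤ) := by
    intro x hx
    have h2 : (x + (j-i)) % (n:ℤ) = (i + (j-i)) % (n:ℤ) := Int.ModEq.add_right _ hx
    rw [h2, show i + (j-i) = j by ring]
  have hmod_j : ∀ x : ℤ, x % (n:ℤ) = j % (n:ℤ) → (x + (i - j)) % (n:ℤ) = i % (n:ℤ) := by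
    intro x hx
    have h2 : (x + (i-j)) % (n:ℤ) = (j + (i-j)) % (n:ℤ) := Int.ModEq.add_right _ hx
    rw [h2, show j + (i-j) = i by ring]
  have hgtau : ∀ m : ℤ, g m = f (τ m) := by
    intro m
    by_cases h1 : m % (n:ℤ) = i % (n:ℤ)
    · rw [hτ]
      simp only [if_pos h1]
      rw [hgval_i _ h1, shift_of_emod hper (hmod_i m h1)]
      ring
    · by_cases h2 : m % (n:ℤ) = j % (n:ℤ)
      · rw [hτ]
        simp only [if_neg h1, if_pos h2]
        rw [hgval_j _ h2, shift_of_emod hper (hmod_j m h2)]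
        ring
      · rw [hτ]
        simp only [if_neg h1, if_neg h2]
        exact hgval_o _ h1 h2
  have htau_invol : ∀ m : ℤ, τ (τ m) = m := by
    intro m
    by_cases h1 : m % (n:ℤ) = i % (n:ℤ)
    · rw [hτ]
      simp only [if_pos h1]
      have h3 := hmod_i m h1
      simp only [if_neg (show ¬ (m + (j-i)) % (n:ℤ) = i % (n:ℤ) by
        rw [h3]; exact fun hc => hne hc.symm), if_pos h3]
      ring
    · by_cases h2 : m % (n:ℤ) = j % (n:ℤ)
      · rw [hτ]
        simp only [if_neg h1, if_pos h2]
        have h3 := hmod_j m h2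
        simp only [if_pos h3]
        ring
      · rw [hτ]
        simp only [if_neg h1, if_neg h2, if_neg h1, if_neg h2]
  have hginj : Function.Injective g := by
    intro a b hab
    rw [hgtau a, hgtau b] at hab
    have := hfinj hab
    have h2 : τ (τ a) = τ (τ b) := by rw [this]
    rw [htau_invol, htau_invol] at h2
    exact h2
  -- residue values for the two-orbit analysis
  have hgi' : g i % (n:ℤ) = f j % (n:ℤ) := by
    rw [hgval_i i rfl, show f j + (i - i) = f j by ring]
  have hgj' : g j % (n:ℤ) = f i % (n:ℤ) := by
    rw [hgval_j j rfl, show f i + (j - j) = f i by ring]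
  obtain ⟨hcards, hdisj, hunion⟩ := two_orbits hn hper hfinj hcyc hgper hne hgi' hgj' hgval_o
  constructor
  swap
  · -- second component
    exact hcards
  -- first component
  rw [resParams_fst hn g hgper hgbd hginj i, resParams_fst hn g hgper hgbd hginj j]
  -- split the winding count of g over the two orbits
  have hresmem : ∀ m : ℤ, m % (n:ℤ) ∈ orbitF n g i ∪ orbitF n g j := by
    intro m
    rw [hunion, Finset.mem_Ico]
    exact ⟨Int.emod_nonneg _ hnz, Int.emod_lt_of_pos _ (by exact_mod_cast hn)⟩
  have hsplit : ((Finset.Icc 1 (n:ℤ)).filter (fun m => m % (n:ℤ) ∈ orbitF n g i ∧ (n:ℤ) < g m))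
      ∪ ((Finset.Icc 1 (n:ℤ)).filter (fun m => m % (n:ℤ) ∈ orbitF n g j ∧ (n:ℤ) < g m))
      = (Finset.Icc 1 (n:ℤ)).filter (fun m => (n:ℤ) < g m) := by
    rw [← Finset.filter_or]
    apply Finset.filter_congr
    intro m _
    constructor
    · rintro (⟨_, hq⟩ | ⟨_, hq⟩) <;> exact hq
    · intro hq
      rcases Finset.mem_union.mp (hresmem m) with h | h
      · exact Or.inl ⟨h, hq⟩
      · exact Or.inr ⟨h, hq⟩
  have hdisj2 : Disjoint
      ((Finset.Icc 1 (n:ℤ)).filter (fun m => m % (n:ℤ) ∈ orbitF n g i ∧ (n:ℤ) < g m))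
      ((Finset.Icc 1 (n:ℤ)).filter (fun m => m % (n:ℤ) ∈ orbitF n g j ∧ (n:ℤ) < g m)) := by
    rw [Finset.disjoint_left]
    intro x hx1 hx2
    rw [Finset.mem_filter] at hx1 hx2
    exact (Finset.disjoint_left.mp hdisj) hx1.2.1 hx2.2.1
  have hKsum : ((Finset.Icc 1 (n:ℤ)).filter
        (fun m => m % (n:ℤ) ∈ orbitF n g i ∧ (n:ℤ) < g m)).card
      + ((Finset.Icc 1 (n:ℤ)).filter
        (fun m => m % (n:ℤ) ∈ orbitF n g j ∧ (n:ℤ) < g m)).card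
      = winding n g := by
    rw [← Finset.card_union_of_disjoint hdisj2, hsplit, winding]
  rw [hKsum]
  -- winding n g = winding n f
  have hj2n : j ≤ 2 * (n:ℤ) := by
    by_contra hgt
    push_neg at hgt
    have h1 := hbd j
    have h2 := hbd i
    omega
  set j₀ : ℤ := if j ≤ (n:ℤ) then j else j - n with hj₀
  have hj₀mod : j₀ % (n:ℤ) = j % (n:ℤ) := by
    rw [hj₀]
    split_ifs with hc
    · rfl
    · rw [show j - (n:ℤ) = j + (-1)*(n:ℤ) by ring, Int.add_mul_emod_self_right]
  have hj₀Icc : 1 ≤ j₀ ∧ j₀ ≤ (n:ℤ) := by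
    rw [hj₀]; split_ifs with hc <;> omega
  have hij₀ne : i ≠ j₀ := by
    intro hc
    apply hne
    rw [hc, hj₀mod]
  have hwg : winding n g = winding n f := by
    rw [winding, winding, Finset.card_filter, Finset.card_filter]
    have hiin : i ∈ Finset.Icc 1 (n:ℤ) := Finset.mem_Icc.mpr ⟨hi1, hin⟩
    have hj₀in : j₀ ∈ (Finset.Icc 1 (n:ℤ)).erase i := by
      rw [Finset.mem_erase]
      exact ⟨fun hc => hij₀ne hc.symm, Finset.mem_Icc.mpr hj₀Icc⟩
    rw [← Finset.add_sum_erase _ _ hiin, ← Finset.add_sum_erase _ _ hj₀in,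
        ← Finset.add_sum_erase _ (fun m => if (n:ℤ) < f m then 1 else 0) hiin,
        ← Finset.add_sum_erase _ (fun m => if (n:ℤ) < f m then 1 else 0) hj₀in]
    have hrest : ∑ m ∈ ((Finset.Icc 1 (n:ℤ)).erase i).erase j₀,
          (if (n:ℤ) < g m then (1:ℕ) else 0)
        = ∑ m ∈ ((Finset.Icc 1 (n:ℤ)).erase i).erase j₀,
          (if (n:ℤ) < f m then (1:ℕ) else 0) := by
      apply Finset.sum_congr rfl
      intro m hm
      rw [Finset.mem_erase, Finset.mem_erase, Finset.mem_Icc] at hm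
      obtain ⟨hmj₀, hmi, hm1, hm2⟩ := hm
      have hri : m % (n:ℤ) ≠ i % (n:ℤ) := by
        intro hc
        exact hmi (emod_inj_Icc ⟨hm1, hm2⟩ ⟨hi1, hin⟩ hc)
      have hrj : m % (n:ℤ) ≠ j % (n:ℤ) := by
        intro hc
        rw [← hj₀mod] at hc
        exact hmj₀ (emod_inj_Icc ⟨hm1, hm2⟩ hj₀Icc hc)
      rw [hgval_o _ hri hrj]
    rw [hrest]
    -- compare the two swapped indicator values
    have hgiv : g i = f j := by rw [hgval_i i rfl]; ring
    have hgj₀v : g j₀ = f i + (j₀ - j) := hgval_j j₀ hj₀mod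
    have hfj₀v : f j₀ = f j + (j₀ - j) := shift_of_emod hper hj₀mod
    have hbi := hbd i
    have hbj := hbd j
    rw [hgiv, hgj₀v, hfj₀v]
    rcases (show j₀ = j ∨ (j₀ = j - n ∧ (n:ℤ) < j) by rw [hj₀]; split_ifs with hc <;> omega)
      with hc | ⟨hc, hc2⟩
    · rw [hc]
      split_ifs <;> omega
    · split_ifs <;> omega
  rw [hwg, hwind]
end

section
/- For every f ∈ Θ_{k,n} and every α = (a,b) ∈ [k-1]×[n-1] with a/b = k/n, the point α belongs to the inversion multiset F'(f). -/
open Finset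

section Stmt9Aux

lemma addper {h : ℤ → ℤ} {p q : ℤ} (hper : ∀ m, h (m + p) = h m + q) :
    ∀ (c : ℤ) (m : ℤ), h (m + c * p) = h m + c * q := by
  intro c
  induction c using Int.induction_on with
  | zero => simp
  | succ c ih =>
    intro m
    have h1 : m + ((c : ℤ) + 1) * p = m + (c : ℤ) * p + p := by ring
    rw [h1, hper, ih]; ring
  | pred c ih =>
    intro m
    have h2 : h (m - p) = h m - q := by
      have h3 := hper (m - p)
      have h4 : m - p + p = m := by ring
      rw [h4] at h3
      linarith
    have h5 : m + (-(c : ℤ) - 1) * p = (m - p) + (-(c : ℤ)) * p := by ring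
    rw [h5, ih, h2]; ring

lemma iter_addper {h : ℤ → ℤ} {p : ℕ} (hper : ∀ m, h (m + (p : ℤ)) = h m + p) :
    ∀ (s : ℕ) (c : ℤ) (m : ℤ), h^[s] (m + c * p) = h^[s] m + c * p := by
  intro s
  induction s with
  | zero => simp
  | succ s ih =>
    intro c m
    rw [Function.iterate_succ_apply, Function.iterate_succ_apply, addper hper c m, ih]

lemma edm {b : ℤ} (hb : 0 < b) {m q r : ℤ} (h0 : 0 ≤ r) (h1 : r < b) (h2 : m = q * b + r) :
    m / b = q ∧ m % b = r := by
  constructor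
  · rw [h2, show q * b + r = r + q * b from by ring, Int.add_mul_ediv_right _ _ hb.ne',
      Int.ediv_eq_zero_of_lt h0 h1, zero_add]
  · rw [h2, show q * b + r = r + q * b from by ring, Int.add_mul_emod_self_right,
      Int.emod_eq_of_lt h0 h1]

lemma windKey {p : ℕ} (hp : 0 < p) {h : ℤ → ℤ} (hinj : Function.Injective h)
    (hper : ∀ m : ℤ, h (m + (p:ℤ)) = h m + p)
    (hbd : ∀ m : ℤ, m ≤ h m ∧ h m ≤ m + p)
    (y : ℤ)
    (hdist : ∀ s s' : ℕ, s < p → s' < p → h^[s] y % (p:ℤ) = h^[s'] y % (p:ℤ) → s = s') :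
    h^[p] y = y + (winding p h : ℤ) * p := by
  classical
  have hpZ : (0:ℤ) < p := by exact_mod_cast hp
  have hperZ := addper hper
  have hdisp : ∀ m : ℤ, h m - m = h (m % p) - m % p := by
    intro m
    have hm : m = m % p + (m / p) * p := by rw [Int.emod_def]; ring
    conv_lhs => rw [hm]
    rw [hperZ (m / p) (m % p)]
    ring
  have tele : ∑ s ∈ Finset.range p, (h (h^[s] y) - h^[s] y) = h^[p] y - y := by
    have h1 := Finset.sum_range_sub (fun s => h^[s] y) p
    simp only [Function.iterate_succ_apply'] at h1
    simpa using h1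
  have hinj2 : ∀ x ∈ Finset.range p, ∀ x' ∈ Finset.range p,
      h^[x] y % (p:ℤ) = h^[x'] y % (p:ℤ) → x = x' := by
    intro s hs s' hs' hss
    exact hdist s s' (Finset.mem_range.1 hs) (Finset.mem_range.1 hs') hss
  have himg : (Finset.range p).image (fun s => h^[s] y % (p:ℤ)) = Finset.Ico (0:ℤ) (p:ℤ) := by
    apply Finset.eq_of_subset_of_card_le
    · intro z hz
      obtain ⟨s, _, rfl⟩ := Finset.mem_image.1 hz
      rw [Finset.mem_Ico]
      exact ⟨Int.emod_nonneg _ hpZ.ne', Int.emod_lt_of_pos _ hpZ⟩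
    · have h2 : ((Finset.range p).image (fun s => h^[s] y % (p:ℤ))).card = p := by
        rw [Finset.card_image_of_injOn, Finset.card_range]
        intro s hs s' hs' hss
        exact hdist s s' (by simpa using hs) (by simpa using hs') hss
      rw [h2, Int.card_Ico]
      simp
  have hsum2 : ∑ m ∈ Finset.Ico (0:ℤ) (p:ℤ), (h m - m)
      = ∑ s ∈ Finset.range p, (h (h^[s] y) - h^[s] y) := by
    rw [← himg, Finset.sum_image hinj2]
    exact Finset.sum_congr rfl fun s _ => (hdisp _).symm
  have hIco : Finset.Ico (0:ℤ) (p:ℤ) = insert 0 (Finset.Ico (1:ℤ) (p:ℤ)) := by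
    ext z
    simp only [Finset.mem_Ico, Finset.mem_insert]
    omega
  have hIcc : Finset.Icc (1:ℤ) (p:ℤ) = insert (p:ℤ) (Finset.Ico (1:ℤ) (p:ℤ)) := by
    ext z
    simp only [Finset.mem_Icc, Finset.mem_Ico, Finset.mem_insert]
    omega
  have hd0 : h 0 - 0 = h (p:ℤ) - (p:ℤ) := by
    have h1 := hper 0
    rw [zero_add] at h1
    rw [h1]; ring
  have hshift : ∑ m ∈ Finset.Ico (0:ℤ) (p:ℤ), (h m - m)
      = ∑ m ∈ Finset.Icc (1:ℤ) (p:ℤ), (h m - m) := by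
    rw [hIco, hIcc, Finset.sum_insert (by simp), Finset.sum_insert (by simp), hd0]
  have hL1 : ∑ m ∈ Finset.Icc (1:ℤ) (p:ℤ), (h m - m) = (winding p h : ℤ) * p := by
    set ρ : ℤ → ℤ := fun m => if h m ≤ p then h m else h m - p with hρ
    have hmaps : ∀ m ∈ Finset.Icc (1:ℤ) (p:ℤ), ρ m ∈ Finset.Icc (1:ℤ) (p:ℤ) := by
      intro m hm
      rw [Finset.mem_Icc] at hm ⊢
      have h1 := hbd m
      simp only [hρ]
      split_ifs with h2 <;> omega
    have hinjρ : ∀ m ∈ Finset.Icc (1:ℤ) (p:ℤ), ∀ m' ∈ Finset.Icc (1:ℤ) (p:ℤ),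
        ρ m = ρ m' → m = m' := by
      intro m hm m' hm' he
      rw [Finset.mem_Icc] at hm hm'
      simp only [hρ] at he
      split_ifs at he with h1 h2 h2
      · exact hinj he
      · exfalso
        have h3 : h m' = h (m + p) := by rw [hper]; omega
        have h4 := hinj h3
        omega
      · exfalso
        have h3 : h m = h (m' + p) := by rw [hper]; omega
        have h4 := hinj h3
        omega
      · have h3 : h m = h m' := by omega
        exact hinj h3
    have himgρ : (Finset.Icc (1:ℤ) (p:ℤ)).image ρ = Finset.Icc (1:ℤ) (p:ℤ) := by
      apply Finset.eq_of_subset_of_card_le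
      · intro z hz
        obtain ⟨m, hm, rfl⟩ := Finset.mem_image.1 hz
        exact hmaps m hm
      · rw [Finset.card_image_of_injOn (fun m hm m' hm' => hinjρ m hm m' hm')]
    have hsumρ : ∑ m ∈ Finset.Icc (1:ℤ) (p:ℤ), ρ m = ∑ m ∈ Finset.Icc (1:ℤ) (p:ℤ), m := by
      conv_rhs => rw [← himgρ]
      rw [Finset.sum_image hinjρ]
    have hsplit : ∑ m ∈ Finset.Icc (1:ℤ) (p:ℤ), (h m - m)
        = ∑ m ∈ Finset.Icc (1:ℤ) (p:ℤ), ((ρ m - m) + if (p:ℤ) < h m then (p:ℤ) else 0) := by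
      refine Finset.sum_congr rfl fun m _ => ?_
      simp only [hρ]
      by_cases hc : h m ≤ (p:ℤ)
      · rw [if_pos hc, if_neg (not_lt.2 hc)]; ring
      · rw [if_neg hc, if_pos (lt_of_not_ge hc)]; ring
    rw [hsplit, Finset.sum_add_distrib, Finset.sum_sub_distrib, hsumρ, sub_self, zero_add]
    rw [Finset.sum_ite, Finset.sum_const, Finset.sum_const_zero, add_zero, nsmul_eq_mul]
    rfl
  have := tele
  rw [← hsum2, hshift, hL1] at this
  linarith

lemma relabel_winding {n b : ℕ} (hb : 0 < b) {g : ℤ → ℤ} (hginj : Function.Injective g)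
    (hgper : ∀ m : ℤ, g (m + (n:ℤ)) = g m + n)
    (hgbd : ∀ m : ℤ, m ≤ g m ∧ g m ≤ m + n)
    {S : Set ℤ} {g₁ : ℤ → ℤ} (hrel : IsRelabelOn n g S b g₁)
    {y : ℤ} (hy : y ∈ S) (a : ℕ)
    (horb : ∀ s s' : ℕ, s < b → s' < b → g^[s] y % (n:ℤ) = g^[s'] y % (n:ℤ) → s = s')
    (hcyc : g^[b] y = y + (a:ℤ) * n) :
    winding b g₁ = a := by
  obtain ⟨φ, hmono, hφper, hrange, hcomm⟩ := hrel
  have hφinj := hmono.injective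
  have hφZ := addper hφper
  have hg₁bd : ∀ m : ℤ, m ≤ g₁ m ∧ g₁ m ≤ m + b := by
    intro m
    constructor
    · have h1 : φ m ≤ φ (g₁ m) := by rw [← hcomm]; exact (hgbd (φ m)).1
      exact hmono.le_iff_le.1 h1
    · have h1 : φ (g₁ m) ≤ φ (m + b) := by
        rw [← hcomm, hφper]; exact (hgbd (φ m)).2
      exact hmono.le_iff_le.1 h1
  have hg₁inj : Function.Injective g₁ := by
    intro m m' h
    have h1 : g (φ m) = g (φ m') := by rw [hcomm, hcomm, h]
    exact hφinj (hginj h1)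
  have hg₁per : ∀ m : ℤ, g₁ (m + (b:ℤ)) = g₁ m + b := by
    intro m
    apply hφinj
    rw [← hcomm, hφper, hφper, ← hcomm, hgper]
  obtain ⟨t₀, ht₀⟩ : ∃ t₀, φ t₀ = y := by
    have : y ∈ Set.range φ := hrange.symm ▸ hy
    exact this
  have hit : ∀ s : ℕ, φ (g₁^[s] t₀) = g^[s] y := by
    intro s
    induction s with
    | zero => simpa using ht₀
    | succ s ih =>
      rw [Function.iterate_succ_apply', Function.iterate_succ_apply', ← hcomm, ih]
  have hdist : ∀ s s' : ℕ, s < b → s' < b → g₁^[s] t₀ % (b:ℤ) = g₁^[s'] t₀ % (b:ℤ) → s = s' := by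
    intro s s' hs hs' h
    have h1 : (b:ℤ) ∣ g₁^[s'] t₀ - g₁^[s] t₀ := Int.ModEq.dvd h
    obtain ⟨d, hd⟩ := h1
    have h2 : g₁^[s'] t₀ = g₁^[s] t₀ + d * b := by linear_combination hd
    have h3 : g^[s'] y = g^[s] y + d * n := by
      rw [← hit, ← hit, h2, hφZ d]
    apply horb s s' hs hs'
    rw [h3, Int.add_mul_emod_self_right]
  have hwind := windKey hb hg₁inj hg₁per hg₁bd t₀ hdist
  have hab : g₁^[b] t₀ = t₀ + (a:ℤ) * b := by
    apply hφinj
    rw [hit, hcyc, ← ht₀]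
    exact (hφZ a t₀).symm
  have hfin : (winding b g₁ : ℤ) * b = (a:ℤ) * b := by
    rw [hwind] at hab
    linarith
  have hbne : (b:ℤ) ≠ 0 := by exact_mod_cast hb.ne'
  have hfin2 : (winding b g₁ : ℤ) = a := mul_right_cancel₀ hbne hfin
  exact_mod_cast hfin2

lemma exists_relabel {n b : ℕ} (hn : 0 < n) (hb : 0 < b) (R : Finset ℤ)
    (hR : ∀ z ∈ R, 0 ≤ z ∧ z < (n:ℤ)) (hcard : R.card = b)
    (g : ℤ → ℤ) (hgper : ∀ m : ℤ, g (m + (n:ℤ)) = g m + n)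
    (hclosed : ∀ z : ℤ, z % (n:ℤ) ∈ R → g z % (n:ℤ) ∈ R) :
    ∃ g₁ : ℤ → ℤ, IsRelabelOn n g {m : ℤ | m % (n:ℤ) ∈ R} b g₁ := by
  have hbZ : (0:ℤ) < b := by exact_mod_cast hb
  have hnZ : (0:ℤ) < n := by exact_mod_cast hn
  set ρ : Fin b → ℤ := fun s => (R.orderIsoOfFin hcard s).1 with hρdef
  have hρmono : ∀ s t : Fin b, s < t → ρ s < ρ t := by
    intro s t hst
    exact Subtype.coe_lt_coe.2 ((R.orderIsoOfFin hcard).lt_iff_lt.2 hst)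
  have hρmem : ∀ s, ρ s ∈ R := fun s => (R.orderIsoOfFin hcard s).2
  have hρbd : ∀ s, 0 ≤ ρ s ∧ ρ s < (n:ℤ) := fun s => hR _ (hρmem s)
  have hρsurj : ∀ z ∈ R, ∃ s : Fin b, ρ s = z := by
    intro z hz
    obtain ⟨s, hs⟩ := (R.orderIsoOfFin hcard).surjective ⟨z, hz⟩
    exact ⟨s, congrArg Subtype.val hs⟩
  have hfin : ∀ m : ℤ, (m % (b:ℤ)).toNat < b := by
    intro m
    have h1 : 0 ≤ m % (b:ℤ) := Int.emod_nonneg _ hbZ.ne'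
    have h2 : m % (b:ℤ) < b := Int.emod_lt_of_pos _ hbZ
    omega
  set φ : ℤ → ℤ := fun m => ρ ⟨(m % (b:ℤ)).toNat, hfin m⟩ + (m / b) * n with hφdef
  have hφadd : ∀ m : ℤ, φ (m + (b:ℤ)) = φ m + n := by
    intro m
    obtain ⟨hq, hr⟩ := edm hbZ (m := m + b) (q := m / b + 1) (r := m % b)
      (Int.emod_nonneg _ hbZ.ne') (Int.emod_lt_of_pos _ hbZ)
      (by linear_combination (-1 : ℤ) * Int.mul_ediv_add_emod m b)
    have hFin : (⟨((m + (b:ℤ)) % b).toNat, hfin _⟩ : Fin b) = ⟨(m % b).toNat, hfin m⟩ := by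
      apply Fin.ext
      simp only
      rw [hr]
    simp only [hφdef]
    rw [hFin, hq]
    ring
  have hmono : StrictMono φ := by
    apply strictMono_int_of_lt_succ
    intro m
    have hnn := Int.emod_nonneg m hbZ.ne'
    have hlb := Int.emod_lt_of_pos m hbZ
    rcases lt_or_ge (m % b + 1) (b:ℤ) with hc | hc
    · obtain ⟨hq, hr⟩ := edm hbZ (m := m + 1) (q := m / b) (r := m % b + 1)
        (by omega) hc (by linear_combination (-1 : ℤ) * Int.mul_ediv_add_emod m b)
      have hpr : (m % (b:ℤ)).toNat + 1 < b := by omega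
      have hFin : (⟨((m + 1) % (b:ℤ)).toNat, hfin _⟩ : Fin b)
          = ⟨(m % (b:ℤ)).toNat + 1, hpr⟩ := by
        apply Fin.ext
        simp only
        rw [hr]
        omega
      simp only [hφdef]
      rw [hFin, hq]
      have hlt : ρ ⟨(m % (b:ℤ)).toNat, hfin m⟩ < ρ ⟨(m % (b:ℤ)).toNat + 1, hpr⟩ :=
        hρmono _ _ (by simp [Fin.lt_def])
      linarith
    · have hme : m % (b:ℤ) = b - 1 := by omega
      obtain ⟨hq, hr⟩ := edm hbZ (m := m + 1) (q := m / b + 1) (r := 0) le_rfl hbZ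
        (by linear_combination (-1 : ℤ) * Int.mul_ediv_add_emod m b + hme)
      have hFin0 : (⟨((m + 1) % (b:ℤ)).toNat, hfin _⟩ : Fin b) = ⟨0, hb⟩ := by
        apply Fin.ext
        simp only
        rw [hr]
        simp
      simp only [hφdef]
      rw [hFin0, hq]
      have h1 := hρbd ⟨(m % (b:ℤ)).toNat, hfin m⟩
      have h2 := hρbd ⟨0, hb⟩
      have h3 : (m / b + 1) * (n:ℤ) = (m / b) * n + n := by ring
      rw [h3]
      linarith [h1.2, h2.1]
  have hrange : Set.range φ = {m : ℤ | m % (n:ℤ) ∈ R} := by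
    ext z
    simp only [Set.mem_range, Set.mem_setOf_eq]
    constructor
    · rintro ⟨m, rfl⟩
      simp only [hφdef]
      rw [Int.add_mul_emod_self_right, Int.emod_eq_of_lt (hρbd _).1 (hρbd _).2]
      exact hρmem _
    · intro hz
      obtain ⟨s, hs⟩ := hρsurj (z % n) hz
      refine ⟨((s : ℕ) : ℤ) + (z / n) * b, ?_⟩
      obtain ⟨hq, hr⟩ := edm hbZ (m := ((s : ℕ) : ℤ) + (z / n) * b) (q := z / n) (r := ((s : ℕ) : ℤ))
        (by exact_mod_cast Nat.zero_le _) (by exact_mod_cast s.2) (by ring)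
      have hFin : (⟨((((s : ℕ) : ℤ) + (z / n) * b) % b).toNat, hfin _⟩ : Fin b) = s := by
        apply Fin.ext
        simp only
        rw [hr]
        simp
      simp only [hφdef]
      rw [hFin, hq, hs]
      linear_combination Int.mul_ediv_add_emod z n
  have hSg : ∀ m : ℤ, g (φ m) ∈ Set.range φ := by
    intro m
    rw [hrange]
    have h1 : φ m % (n:ℤ) ∈ R := by
      have h2 : φ m ∈ Set.range φ := ⟨m, rfl⟩
      rw [hrange] at h2
      exact h2
    exact hclosed _ h1
  choose g₁ hg₁ using hSg
  exact ⟨g₁, φ, hmono, hφadd, hrange, fun m => (hg₁ m).symm⟩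

end Stmt9Aux

/-- For every `f ∈ Θ_{k,n}` and every `(a,b) ∈ [k-1]×[n-1]` with `a/b = k/n`,
the point `(a,b)` belongs to the inversion multiset `F'(f)`. -/
theorem positroid_stmt9 (k n : ℕ) (f : ℤ → ℤ) (hf : IsTheta k n f) (a b : ℕ)
    (ha : 1 ≤ a ∧ a ≤ k - 1) (hb : 1 ≤ b ∧ b ≤ n - 1) (hslope : a * n = b * k) :
    (a, b) ∈ invMultiset n f := by
  classical
  obtain ⟨⟨⟨hbij, hfper⟩, hfbd⟩, hcyc, hwind⟩ := hf
  obtain ⟨ha1, _⟩ := ha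
  obtain ⟨hb1, hb2⟩ := hb
  have hn0 : 0 < n := by omega
  have hb0 : 0 < b := hb1
  have hbn : b < n := by omega
  have hnZ : (0:ℤ) < (n:ℤ) := by exact_mod_cast hn0
  have hfinj : Function.Injective f := hbij.injective
  have hfperZ := addper hfper
  have hIter := iter_addper hfper
  set X : ℕ → ℤ := fun s => f^[s] 0 with hXdef
  have hXsucc : ∀ s : ℕ, X (s + 1) = f (X s) := by
    intro s; simp only [hXdef]; rw [Function.iterate_succ_apply']
  have hresinj : ∀ s s' : ℕ, s < n → s' < n → X s % (n:ℤ) = X s' % (n:ℤ) → s = s' := by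
    have hsub : Finset.Ico (0:ℤ) (n:ℤ) ⊆ (Finset.range n).image (fun s => X s % (n:ℤ)) := by
      intro z hz
      rw [Finset.mem_Ico] at hz
      obtain ⟨s, hs, he⟩ := hcyc z
      refine Finset.mem_image.2 ⟨s, Finset.mem_range.2 hs, ?_⟩
      simp only [hXdef]
      rw [he, Int.emod_eq_of_lt hz.1 hz.2]
    have hcard : ((Finset.range n).image (fun s => X s % (n:ℤ))).card = n := by
      apply le_antisymm
      · exact Finset.card_image_le.trans (by simp)
      · have h1 := Finset.card_le_card hsub
        rw [Int.card_Ico] at h1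
        simpa using h1
    have hinj := Finset.injOn_of_card_image_eq (by rw [hcard, Finset.card_range])
    intro s s' hs hs' h
    exact hinj (by simpa using hs) (by simpa using hs') h
  have hXn : X n = (k:ℤ) * n := by
    have h := windKey hn0 hfinj hfper hfbd 0 hresinj
    rw [hwind] at h
    simp only [hXdef]
    simpa using h
  have hXadd : ∀ s : ℕ, X (s + n) = X s + (k:ℤ) * n := by
    intro s
    have h1 : X (s + n) = f^[s] (X n) := by
      simp only [hXdef]; rw [Function.iterate_add_apply]
    rw [h1, hXn]
    have h2 := hIter s k 0
    simp only [hXdef]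
    simpa using h2
  have hXq : ∀ (t q : ℕ), X (t + n * q) = X t + (q:ℤ) * ((k:ℤ) * n) := by
    intro t q
    induction q with
    | zero => simp
    | succ q ih =>
      have h1 : t + n * (q + 1) = (t + n * q) + n := by ring
      rw [h1, hXadd, ih]
      push_cast
      ring
  have hXres : ∀ t : ℕ, X t % (n:ℤ) = X (t % n) % (n:ℤ) := by
    intro t
    conv_lhs => rw [show t = t % n + n * (t / n) from (Nat.mod_add_div t n).symm]
    rw [hXq]
    rw [show ((t / n : ℕ) : ℤ) * ((k:ℤ) * (n:ℤ)) = ((t / n : ℕ) : ℤ) * (k:ℤ) * (n:ℤ) from by ring,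
      Int.add_mul_emod_self_right]
  have hXmod : ∀ t t' : ℕ, (X t % (n:ℤ) = X t' % (n:ℤ)) ↔ t % n = t' % n := by
    intro t t'
    constructor
    · intro h
      rw [hXres t, hXres t'] at h
      exact hresinj _ _ (Nat.mod_lt _ hn0) (Nat.mod_lt _ hn0) h
    · intro h
      rw [hXres t, hXres t', h]
  have hXne : ∀ (r s t : ℕ), s < n → t < n → s ≠ t → X (r + s) % (n:ℤ) ≠ X (r + t) % (n:ℤ) := by
    intro r s t hs ht hst h
    rw [hXmod] at h
    have h2 : s % n = t % n := Nat.ModEq.add_left_cancel' r h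
    rw [Nat.mod_eq_of_lt hs, Nat.mod_eq_of_lt ht] at h2
    exact hst h2
  -- the test sequence u
  set u : ℕ → ℤ := fun r => X (r + b) - X r - (a:ℤ) * n with hudef
  have haZ : (a:ℤ) * (n:ℤ) = (b:ℤ) * (k:ℤ) := by exact_mod_cast hslope
  have hune : ∀ r : ℕ, u r ≠ 0 := by
    intro r h
    simp only [hudef] at h
    have h1 : X (r + b) % (n:ℤ) = X (r + 0) % (n:ℤ) := by
      have h2 : X (r + b) = X r + (a:ℤ) * n := by linarith
      rw [h2, Int.add_mul_emod_self_right]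
      rw [Nat.add_zero]
    exact hXne r b 0 hbn hn0 (by omega) h1
  have huper : ∀ r : ℕ, u (r + n) = u r := by
    intro r
    simp only [hudef]
    rw [show r + n + b = (r + b) + n from by ring, hXadd, hXadd]
    ring
  have husum : ∑ r ∈ Finset.range n, u r = 0 := by
    have h2 : ∑ r ∈ Finset.range n, (X (r + b) - X r) = (b:ℤ) * ((k:ℤ) * n) := by
      calc ∑ r ∈ Finset.range n, (X (r + b) - X r)
          = ∑ r ∈ Finset.range n, ∑ t ∈ Finset.range b, (X ((r+1) + t) - X (r + t)) := by
            refine Finset.sum_congr rfl fun r _ => ?_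
            rw [Finset.sum_congr rfl (fun t _ => by
              rw [show (r+1) + t = r + (t+1) from by ring]),
              Finset.sum_range_sub (fun t => X (r + t)) b]
            simp
        _ = ∑ t ∈ Finset.range b, ∑ r ∈ Finset.range n, (X ((r+1) + t) - X (r + t)) :=
            Finset.sum_comm
        _ = ∑ _t ∈ Finset.range b, ((k:ℤ) * n) := by
            refine Finset.sum_congr rfl fun t _ => ?_
            rw [Finset.sum_range_sub (fun r => X (r + t)) n]
            rw [show n + t = t + n from by ring, hXadd]
            simp
        _ = (b:ℤ) * ((k:ℤ) * n) := by
            rw [Finset.sum_const, Finset.card_range, nsmul_eq_mul]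
    simp only [hudef]
    rw [Finset.sum_sub_distrib, h2, Finset.sum_const,
      Finset.card_range, nsmul_eq_mul]
    linear_combination (-(n:ℤ)) * haZ
  have hexneg : ∃ r, r < n ∧ u r < 0 := by
    by_contra hcon
    push_neg at hcon
    have hpos : ∀ r ∈ Finset.range n, 0 < u r := by
      intro r hr
      rcases (hune r).lt_or_gt with h1 | h1
      · exact absurd h1 (not_lt.2 (hcon r (Finset.mem_range.1 hr)))
      · exact h1
    have := Finset.sum_pos hpos ⟨0, Finset.mem_range.2 hn0⟩
    rw [husum] at this
    exact lt_irrefl _ this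
  have hexpos : ∃ r, r < n ∧ 0 < u r := by
    by_contra hcon
    push_neg at hcon
    have hneg : ∀ r ∈ Finset.range n, u r < 0 := by
      intro r hr
      rcases (hune r).lt_or_gt with h1 | h1
      · exact h1
      · exact absurd h1 (not_lt.2 (hcon r (Finset.mem_range.1 hr)))
    have := Finset.sum_neg hneg ⟨0, Finset.mem_range.2 hn0⟩
    rw [husum] at this
    exact lt_irrefl _ this
  obtain ⟨r₀, hr₀n, hr₀⟩ := hexneg
  obtain ⟨r₁, hr₁n, hr₁⟩ := hexpos
  have hQ : ∃ s : ℕ, 0 < u (r₀ + 1 + s) := by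
    refine ⟨r₁ + n - (r₀ + 1), ?_⟩
    rw [show r₀ + 1 + (r₁ + n - (r₀ + 1)) = r₁ + n from by omega, huper]
    exact hr₁
  set s₀ := Nat.find hQ with hs₀def
  have hs₀spec : 0 < u (r₀ + 1 + s₀) := Nat.find_spec hQ
  have hs₀min : ∀ s, s < s₀ → u (r₀ + 1 + s) < 0 := by
    intro s hs
    have h1 := Nat.find_min hQ hs
    rcases (hune (r₀ + 1 + s)).lt_or_gt with h2 | h2
    · exact h2
    · exact absurd h2 h1
  set r := r₀ + s₀ with hrdef
  have hur : u r < 0 := by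
    rcases Nat.eq_zero_or_pos s₀ with h1 | h1
    · rw [hrdef, h1]
      simpa using hr₀
    · have h2 := hs₀min (s₀ - 1) (by omega)
      rwa [show r₀ + 1 + (s₀ - 1) = r₀ + s₀ from by omega] at h2
  have hur1 : 0 < u (r + 1) := by
    rwa [show r₀ + 1 + s₀ = r₀ + s₀ + 1 from by ring] at hs₀spec
  have hurX : X (r + b) < X r + (a:ℤ) * n := by
    simp only [hudef] at hur
    linarith
  have hur1X : X (r + 1) + (a:ℤ) * n < X (r + 1 + b) := by
    simp only [hudef] at hur1
    linarith
  -- the inversion (i, j)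
  set i : ℤ := (X (r + b) - 1) % n + 1 with hidef
  set c : ℤ := -((X (r + b) - 1) / n) with hcdef
  have hi : i = X (r + b) + c * n := by
    simp only [hidef, hcdef]
    rw [Int.emod_def]
    ring
  set j : ℤ := X r + (a:ℤ) * n + c * n with hjdef
  have hi1 : 1 ≤ i := by
    simp only [hidef]
    have := Int.emod_nonneg (X (r+b) - 1) hnZ.ne'
    omega
  have hin : i ≤ (n:ℤ) := by
    simp only [hidef]
    have := Int.emod_lt_of_pos (X (r+b) - 1) hnZ
    omega
  have hij : i < j := by
    rw [hi, hjdef]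
    linarith
  have hfi : f i = X (r + b + 1) + c * n := by
    rw [hi, hfperZ c, ← hXsucc (r+b)]
  have hfj : f j = X (r + 1) + (a:ℤ) * n + c * n := by
    rw [hjdef, show X r + (a:ℤ)*n + c*n = X r + ((a:ℤ) + c) * n from by ring,
      hfperZ, ← hXsucc r]
    ring
  have hfji : f j < f i := by
    rw [hfi, hfj]
    have hidx : X (r + 1 + b) = X (r + b + 1) := by
      rw [show r+1+b = r+b+1 from by ring]
    linarith
  have hjfj : j ≤ f j := (hfbd j).1
  have hfii : f i ≤ i + n := (hfbd i).2
  have hjin : j < i + n := by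
    by_contra hcon
    push_neg at hcon
    have h1 := hjfj
    have h2 := hfii
    linarith
  have hmemInv : (i, j) ∈ inversions n f := by
    simp only [inversions, Finset.mem_filter, Finset.mem_product, Finset.mem_Icc]
    refine ⟨⟨⟨hi1, hin⟩, ⟨by linarith, by linarith⟩⟩, hij, hfji⟩
  -- residues
  have hires : i % (n:ℤ) = X (r + b) % (n:ℤ) := by
    rw [hi, Int.add_mul_emod_self_right]
  have hjres : j % (n:ℤ) = X r % (n:ℤ) := by
    rw [hjdef, show X r + (a:ℤ)*n + c*n = X r + ((a:ℤ)+c)*n from by ring, Int.add_mul_emod_self_right]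
  have hijres : i % (n:ℤ) ≠ j % (n:ℤ) := by
    rw [hires, hjres]
    have := hXne r b 0 hbn hn0 (by omega)
    simpa using this
  -- the resolved permutation g
  set g : ℤ → ℤ := resolve n f i j with hgdef
  have hg_i : ∀ m : ℤ, m % (n:ℤ) = i % (n:ℤ) → g m = f j + (m - i) := by
    intro m h
    simp only [hgdef, resolve, if_pos h]
  have hg_j : ∀ m : ℤ, m % (n:ℤ) = j % (n:ℤ) → g m = f i + (m - j) := by
    intro m h
    have h2 : ¬ (m % (n:ℤ) = i % (n:ℤ)) := by
      rw [h]
      exact fun hh => hijres hh.symm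
    simp only [hgdef, resolve, if_neg h2, if_pos h]
  have hg_o : ∀ m : ℤ, m % (n:ℤ) ≠ i % (n:ℤ) → m % (n:ℤ) ≠ j % (n:ℤ) → g m = f m := by
    intro m h1 h2
    simp only [hgdef, resolve, if_neg h1, if_neg h2]
  have hdvd : ∀ m z : ℤ, m % (n:ℤ) = z % (n:ℤ) → ∃ d : ℤ, m = z + d * n := by
    intro m z h
    obtain ⟨d, hd⟩ := Int.ModEq.dvd (Int.ModEq.symm h)
    exact ⟨d, by linear_combination hd⟩
  have hgper : ∀ m : ℤ, g (m + (n:ℤ)) = g m + n := by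
    intro m
    have hmod : (m + (n:ℤ)) % n = m % n := by
      simpa using Int.add_mul_emod_self_left (a := m) (b := (n:ℤ)) (c := 1)
    simp only [hgdef, resolve, hmod]
    split_ifs with h1 h2
    · ring
    · ring
    · rw [hfper]
  set τ : ℤ → ℤ := fun m => if m % (n:ℤ) = i % n then m + (j - i)
    else if m % (n:ℤ) = j % n then m - (j - i) else m with hτdef
  have hτi : ∀ m : ℤ, m % (n:ℤ) = i % (n:ℤ) → (m + (j - i)) % (n:ℤ) = j % (n:ℤ) := by
    intro m h
    obtain ⟨d, hd⟩ := hdvd m i h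
    rw [hd, show i + d*(n:ℤ) + (j - i) = j + d * n from by ring, Int.add_mul_emod_self_right]
  have hτj : ∀ m : ℤ, m % (n:ℤ) = j % (n:ℤ) → (m - (j - i)) % (n:ℤ) = i % (n:ℤ) := by
    intro m h
    obtain ⟨d, hd⟩ := hdvd m j h
    rw [hd, show j + d*(n:ℤ) - (j - i) = i + d * n from by ring, Int.add_mul_emod_self_right]
  have hgτ : ∀ m, g m = f (τ m) := by
    intro m
    by_cases h1 : m % (n:ℤ) = i % (n:ℤ)
    · obtain ⟨d, hd⟩ := hdvd m i h1
      rw [hg_i m h1]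
      simp only [hτdef, if_pos h1]
      rw [show m + (j - i) = j + d * (n:ℤ) from by rw [hd]; ring, hfperZ d j, hd]
      ring
    · by_cases h2 : m % (n:ℤ) = j % (n:ℤ)
      · obtain ⟨d, hd⟩ := hdvd m j h2
        rw [hg_j m h2]
        simp only [hτdef, if_neg h1, if_pos h2]
        rw [show m - (j - i) = i + d * (n:ℤ) from by rw [hd]; ring, hfperZ d i, hd]
        ring
      · rw [hg_o m h1 h2]
        simp only [hτdef, if_neg h1, if_neg h2]
  have hτinv : ∀ m, τ (τ m) = m := by
    intro m
    by_cases h1 : m % (n:ℤ) = i % (n:ℤ)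
    · have h2 := hτi m h1
      simp only [hτdef, if_pos h1]
      rw [if_neg (by rw [h2]; exact Ne.symm hijres), if_pos h2]
      ring
    · by_cases h2 : m % (n:ℤ) = j % (n:ℤ)
      · have h3 := hτj m h2
        simp only [hτdef, if_neg h1, if_pos h2]
        rw [if_pos h3]
        ring
      · simp only [hτdef, if_neg h1, if_neg h2]
  have hginj : Function.Injective g := by
    intro m m' h
    rw [hgτ m, hgτ m'] at h
    have h1 := hfinj h
    have h2 : τ (τ m) = τ (τ m') := by rw [h1]
    rwa [hτinv, hτinv] at h2
  have hgbd : ∀ m : ℤ, m ≤ g m ∧ g m ≤ m + n := by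
    intro m
    by_cases h1 : m % (n:ℤ) = i % (n:ℤ)
    · rw [hg_i m h1]
      constructor
      · linarith
      · linarith
    · by_cases h2 : m % (n:ℤ) = j % (n:ℤ)
      · rw [hg_j m h2]
        constructor
        · linarith
        · linarith
      · rw [hg_o m h1 h2]
        exact hfbd m
  have hgperZ := addper hgper
  -- the orbit sequence w
  set w : ℕ → ℤ := fun s => g^[s] i with hwdef
  have hwsucc : ∀ s : ℕ, w (s + 1) = g (w s) := by
    intro s
    simp only [hwdef]
    rw [Function.iterate_succ_apply']
  have hw1 : w 1 = X (r + 1) + ((a:ℤ) + c) * n := by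
    have h0 : w 1 = g i := by simp only [hwdef, Function.iterate_one]
    rw [h0, hg_i i rfl, hfj]
    ring
  have hws : ∀ s : ℕ, 1 ≤ s → s ≤ b → w s = X (r + s) + ((a:ℤ) + c) * n := by
    intro s
    induction s with
    | zero => omega
    | succ s ih =>
      intro h1 hsb
      rcases Nat.eq_zero_or_pos s with rfl | hs1
      · simpa using hw1
      · have hw_s := ih hs1 (by omega)
        rw [hwsucc s, hw_s]
        have hres : (X (r + s) + ((a:ℤ) + c) * n) % (n:ℤ) = X (r + s) % (n:ℤ) :=
          Int.add_mul_emod_self_right _ _ _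
        have hne1 : X (r + s) % (n:ℤ) ≠ i % (n:ℤ) := by
          rw [hires]
          exact hXne r s b (by omega) hbn (by omega)
        have hne2 : X (r + s) % (n:ℤ) ≠ j % (n:ℤ) := by
          rw [hjres]
          have := hXne r s 0 (by omega) hn0 (by omega)
          simpa using this
        rw [hg_o _ (by rw [hres]; exact hne1) (by rw [hres]; exact hne2)]
        rw [hfperZ ((a:ℤ)+c) (X (r+s)), ← hXsucc (r + s),
          show r + (s + 1) = (r + s) + 1 from by ring]
  have hwb : w b = i + (a:ℤ) * n := by
    rw [hws b hb1 le_rfl, hi]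
    ring
  have hgi : g i = f j := by
    rw [hg_i i rfl]
    ring
  have hwb1 : w (b + 1) = w 1 + (a:ℤ) * n := by
    rw [hwsucc b, hwb]
    have h1 : (i + (a:ℤ)*n) % (n:ℤ) = i % (n:ℤ) := Int.add_mul_emod_self_right _ _ _
    rw [hg_i _ h1]
    have h0 : w 1 = g i := by simp only [hwdef, Function.iterate_one]
    rw [h0, hgi]
    ring
  have hwper : ∀ s : ℕ, 1 ≤ s → w (s + b) = w s + (a:ℤ) * n := by
    intro s hs
    induction s with
    | zero => omega
    | succ s ih =>
      rcases Nat.eq_zero_or_pos s with rfl | hs1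
      · rw [show 0 + 1 + b = b + 1 from by ring, hwb1]
      · have h1 := ih hs1
        rw [show s + 1 + b = (s + b) + 1 from by ring, hwsucc, h1,
          hgperZ (a:ℤ) (w s), ← hwsucc s]
  have hwmod : ∀ t : ℕ, w (1 + t) % (n:ℤ) = w (1 + t % b) % (n:ℤ) := by
    intro t
    induction t using Nat.strong_induction_on with
    | _ t ih =>
      by_cases ht : t < b
      · rw [Nat.mod_eq_of_lt ht]
      · push_neg at ht
        have heq : (t - b) % b = t % b := by
          conv_rhs => rw [show t = (t - b) + b from by omega, Nat.add_mod_right]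
        rw [show 1 + t = (1 + (t - b)) + b from by omega, hwper _ (by omega),
          Int.add_mul_emod_self_right, ih (t - b) (by omega), heq]
  have hwres : ∀ s s' : ℕ, s < b → s' < b → w (1 + s) % (n:ℤ) = w (1 + s') % (n:ℤ) → s = s' := by
    intro s s' hs hs' h
    rw [hws (1 + s) (by omega) (by omega), hws (1 + s') (by omega) (by omega),
      Int.add_mul_emod_self_right, Int.add_mul_emod_self_right] at h
    by_contra hne
    exact hXne r (1+s) (1+s') (by omega) (by omega) (by omega) h
  set T : Finset ℤ := (Finset.range b).image (fun s => w (1 + s) % (n:ℤ)) with hTdef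
  have horbT : orbitF n g i = T := by
    ext z
    simp only [orbitF, hTdef, Finset.mem_image, Finset.mem_range]
    constructor
    · rintro ⟨s, hs, rfl⟩
      rcases Nat.eq_zero_or_pos s with rfl | hs1
      · refine ⟨b - 1, by omega, ?_⟩
        rw [show 1 + (b - 1) = b from by omega, hwb, Int.add_mul_emod_self_right]
        simp only [hwdef, Function.iterate_zero, id]
      · refine ⟨(s - 1) % b, Nat.mod_lt _ hb0, ?_⟩
        rw [← hwmod (s - 1), show 1 + (s - 1) = s from by omega]
    · rintro ⟨s, hs, rfl⟩
      exact ⟨1 + s, by omega, by simp only [hwdef]⟩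
  have hTsub : ∀ z ∈ T, 0 ≤ z ∧ z < (n:ℤ) := by
    intro z hz
    simp only [hTdef, Finset.mem_image] at hz
    obtain ⟨s, _, rfl⟩ := hz
    exact ⟨Int.emod_nonneg _ hnZ.ne', Int.emod_lt_of_pos _ hnZ⟩
  have hTcard : T.card = b := by
    rw [hTdef, Finset.card_image_of_injOn, Finset.card_range]
    intro s hs s' hs' h
    exact hwres s s' (by simpa using hs) (by simpa using hs') h
  have hTclosed : ∀ z : ℤ, z % (n:ℤ) ∈ T → g z % (n:ℤ) ∈ T := by
    intro z hz
    simp only [hTdef, Finset.mem_image, Finset.mem_range] at hz ⊢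
    obtain ⟨s, hs, hzs⟩ := hz
    obtain ⟨d, hd⟩ := hdvd z (w (1 + s)) hzs.symm
    refine ⟨(s + 1) % b, Nat.mod_lt _ hb0, ?_⟩
    rw [hd, hgperZ d (w (1+s)), ← hwsucc (1 + s), Int.add_mul_emod_self_right,
      show (1 + s) + 1 = 1 + (s + 1) from by ring]
    exact (hwmod (s + 1)).symm
  have hyT : w 1 % (n:ℤ) ∈ T := by
    simp only [hTdef, Finset.mem_image, Finset.mem_range]
    exact ⟨0, hb0, by norm_num⟩
  have hitw : ∀ t : ℕ, g^[t] (w 1) = w (1 + t) := by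
    intro t
    simp only [hwdef]
    rw [show 1 + t = t + 1 from by omega]
    have h1 := Function.iterate_add_apply g t 1 i
    simp only [Function.iterate_one] at h1
    exact h1.symm
  have horb1 : ∀ s s' : ℕ, s < b → s' < b →
      g^[s] (w 1) % (n:ℤ) = g^[s'] (w 1) % (n:ℤ) → s = s' := by
    intro s s' hs hs' h
    rw [hitw s, hitw s'] at h
    exact hwres s s' hs hs' h
  have hcycy : g^[b] (w 1) = w 1 + (a:ℤ) * n := by
    rw [hitw b, show 1 + b = b + 1 from by omega, hwb1]
  -- conclusion
  refine Multiset.mem_map.2 ⟨(i, j), by rw [Finset.mem_val]; exact hmemInv, ?_⟩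
  show resParamsAt n (resolve n f i j) i = (a, b)
  rw [← hgdef]
  simp only [resParamsAt]
  rw [horbT, hTcard]
  have hsingle : {k₁ : ℕ | ∃ g₁, IsRelabelOn n g {m : ℤ | m % (n:ℤ) ∈ T} b g₁
      ∧ winding b g₁ = k₁} = {a} := by
    ext k₁
    simp only [Set.mem_setOf_eq, Set.mem_singleton_iff]
    constructor
    · rintro ⟨g₁, hrel, rfl⟩
      exact relabel_winding hb0 hginj hgper hgbd hrel hyT a horb1 hcycy
    · intro hk
      obtain ⟨g₁, hrel⟩ := exists_relabel hn0 hb0 T hTsub hTcard g hgper hTclosed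
      exact ⟨g₁, hrel, by rw [hk]; exact relabel_winding hb0 hginj hgper hgbd hrel hyT a horb1 hcycy⟩
  rw [hsingle, csInf_singleton]
end
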